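/- arXiv:1905.04012 — 4 statements merged into one kernel-verified Lean document; each statement's English description precedes it below -/
import Mathlib

section
/- Let n ≥ 1 be an integer and l ≥ 0 a real number. Suppose u₀ ∈ H^{l+1}(ℝⁿ) and u₁ ∈ H^{l}(ℝⁿ). Then there exists a constant C > 0, depending only on n and l, such that for all t ≥ 0, ∫_{|ξ| ≥ 1} | û(t,ξ) − ( û₁(ξ)·e^{−t/(2|ξ|²)}·sin(t|ξ|)/|ξ| + û₀(ξ)·e^{−t/(2|ξ|²)}·cos(t|ξ|) ) |² dξ ≤ C·( ‖u₁‖²_{H^l} + ‖u₀‖²_{H^{l+1}} )·(1+t)^{−l−3}. -/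
open MeasureTheory Real Set

noncomputable section

namespace DampedPlate

variable {n : ℕ}

/-- `ℝⁿ` as a Euclidean space. -/
abbrev Rn (n : ℕ) := EuclideanSpace ℝ (Fin n)

/-- The Fourier transform `f̂(ξ) = ∫ f(x) e^{-i ξ·x} dx` of a real-valued function. -/
def ftr (f : Rn n → ℝ) (ξ : Rn n) : ℂ :=
  ∫ x : Rn n, (f x : ℂ) * Complex.exp (-Complex.I * ((inner ℝ ξ x : ℝ) : ℂ))

/-- The multiplier `E₀(t,ξ)`. -/
def E0 (ζ t : ℝ) (ξ : Rn n) : ℝ :=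
  if ζ < ‖ξ‖ then
    Real.exp (-t / (2 * (1 + ‖ξ‖ ^ 2))) *
      Real.cos (t * Real.sqrt (4 * ‖ξ‖ ^ 2 * (1 + ‖ξ‖ ^ 2) ^ 2 - 1) / (2 * (1 + ‖ξ‖ ^ 2)))
  else
    Real.exp (-t / (2 * (1 + ‖ξ‖ ^ 2))) *
      Real.cosh (t * Real.sqrt (1 - 4 * ‖ξ‖ ^ 2 * (1 + ‖ξ‖ ^ 2) ^ 2) / (2 * (1 + ‖ξ‖ ^ 2)))

/-- The multiplier `E₁(t,ξ)`. -/
def E1 (ζ t : ℝ) (ξ : Rn n) : ℝ :=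
  if ζ < ‖ξ‖ then
    Real.exp (-t / (2 * (1 + ‖ξ‖ ^ 2))) *
      (Real.sin (t * Real.sqrt (4 * ‖ξ‖ ^ 2 * (1 + ‖ξ‖ ^ 2) ^ 2 - 1) / (2 * (1 + ‖ξ‖ ^ 2))) /
        (Real.sqrt (4 * ‖ξ‖ ^ 2 * (1 + ‖ξ‖ ^ 2) ^ 2 - 1) / (2 * (1 + ‖ξ‖ ^ 2))))
  else
    Real.exp (-t / (2 * (1 + ‖ξ‖ ^ 2))) *
      (Real.sinh (t * Real.sqrt (1 - 4 * ‖ξ‖ ^ 2 * (1 + ‖ξ‖ ^ 2) ^ 2) / (2 * (1 + ‖ξ‖ ^ 2))) /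
        (Real.sqrt (1 - 4 * ‖ξ‖ ^ 2 * (1 + ‖ξ‖ ^ 2) ^ 2) / (2 * (1 + ‖ξ‖ ^ 2))))

/-- The Fourier transform of the solution, expressed in terms of the Fourier transforms
`v₀ = û₀`, `v₁ = û₁` of the initial data:
`û(t,ξ) = û₀(ξ)E₀(t,ξ) + (û₁(ξ) + û₀(ξ)/(2(1+|ξ|²))) E₁(t,ξ)`. -/
def uhatC (ζ : ℝ) (v₀ v₁ : Rn n → ℂ) (t : ℝ) (ξ : Rn n) : ℂ :=
  v₀ ξ * ((E0 ζ t ξ : ℝ) : ℂ) +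
    (v₁ ξ + v₀ ξ * (((1 : ℝ) / (2 * (1 + ‖ξ‖ ^ 2)) : ℝ) : ℂ)) * ((E1 ζ t ξ : ℝ) : ℂ)

/-- The Fourier transform of the solution of the damped plate equation with data `u₀, u₁`. -/
def uhat (ζ : ℝ) (u₀ u₁ : Rn n → ℝ) (t : ℝ) (ξ : Rn n) : ℂ :=
  uhatC ζ (ftr u₀) (ftr u₁) t ξ

/-- The wave-like profile
`û₁(ξ) e^{-t/(2|ξ|²)} sin(t|ξ|)/|ξ| + û₀(ξ) e^{-t/(2|ξ|²)} cos(t|ξ|)`,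
in terms of the Fourier transforms of the data. -/
def waveC (v₀ v₁ : Rn n → ℂ) (t : ℝ) (ξ : Rn n) : ℂ :=
  v₁ ξ * ((Real.exp (-t / (2 * ‖ξ‖ ^ 2)) * (Real.sin (t * ‖ξ‖) / ‖ξ‖) : ℝ) : ℂ) +
    v₀ ξ * ((Real.exp (-t / (2 * ‖ξ‖ ^ 2)) * Real.cos (t * ‖ξ‖) : ℝ) : ℂ)

/-- The wave-like profile for real data `u₀, u₁`. -/
def wave (u₀ u₁ : Rn n → ℝ) (t : ℝ) (ξ : Rn n) : ℂ := waveC (ftr u₀) (ftr u₁) t ξ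

/-- Membership in `H^l`, expressed on the Fourier side. -/
def MemHC (l : ℝ) (v : Rn n → ℂ) : Prop :=
  Integrable fun ξ : Rn n => (1 + ‖ξ‖ ^ 2) ^ l * ‖v ξ‖ ^ 2

/-- The `H^l` norm, expressed on the Fourier side. -/
def HNormC (l : ℝ) (v : Rn n → ℂ) : ℝ :=
  (∫ ξ : Rn n, (1 + ‖ξ‖ ^ 2) ^ l * ‖v ξ‖ ^ 2) ^ ((1 : ℝ) / 2)

/-- `f ∈ H^l(ℝⁿ)`. -/
def MemH (l : ℝ) (f : Rn n → ℝ) : Prop := MemHC l (ftr f)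

/-- `‖f‖_{H^l}`. -/
def HNorm (l : ℝ) (f : Rn n → ℝ) : ℝ := HNormC l (ftr f)

/-- `‖f‖_{1,1} = ∫ (1+|x|)|f(x)| dx`. -/
def Norm11 (f : Rn n → ℝ) : ℝ := ∫ x : Rn n, (1 + ‖x‖) * |f x|

/-- `f ∈ L^{1,1}(ℝⁿ)`. -/
def MemL11 (f : Rn n → ℝ) : Prop :=
  Integrable f ∧ Integrable fun x : Rn n => (1 + ‖x‖) * |f x|

/-- `P_j = ∫ u_j(x) dx`. -/
def Pint (f : Rn n → ℝ) : ℝ := ∫ x : Rn n, f x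

/-- `I₀ = ‖u₁‖_{H^l} + ‖u₀‖_{H^{l+1}} + ‖u₁‖_{1,1} + ‖u₀‖_{1,1}`. -/
def I0 (l : ℝ) (u₀ u₁ : Rn n → ℝ) : ℝ :=
  HNorm l u₁ + HNorm (l + 1) u₀ + Norm11 u₁ + Norm11 u₀

/-- The heat-like profile `(P₁ + P₀) e^{-t|ξ|²}`. -/
def heat (u₀ u₁ : Rn n → ℝ) (t : ℝ) (ξ : Rn n) : ℂ :=
  (((Pint u₁ + Pint u₀) * Real.exp (-t * ‖ξ‖ ^ 2) : ℝ) : ℂ)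

/-- `ζ` is the unique number in `(0,1)` with `4ζ²(1+ζ²)² = 1`. -/
def zetaCond (ζ : ℝ) : Prop := 0 < ζ ∧ ζ < 1 ∧ 4 * ζ ^ 2 * (1 + ζ ^ 2) ^ 2 = 1

end DampedPlate

open DampedPlate


set_option maxHeartbeats 2000000


lemma abs_sin_sub_sin_le (a b : ℝ) : |Real.sin a - Real.sin b| ≤ |a - b| := by
  rw [Real.sin_sub_sin]
  calc |2 * Real.sin ((a-b)/2) * Real.cos ((a+b)/2)|
      = 2 * |Real.sin ((a-b)/2)| * |Real.cos ((a+b)/2)| := by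
        rw [abs_mul, abs_mul]; norm_num
    _ ≤ 2 * |(a-b)/2| * 1 := by
        apply mul_le_mul _ (Real.abs_cos_le_one _) (abs_nonneg _) (by positivity)
        exact mul_le_mul_of_nonneg_left Real.abs_sin_le_abs (by norm_num)
    _ = 2 * (|a - b| / 2) := by rw [abs_div, abs_two]; ring
    _ = |a - b| := by ring

lemma abs_cos_sub_cos_le (a b : ℝ) : |Real.cos a - Real.cos b| ≤ |a - b| := by
  rw [Real.cos_sub_cos]
  calc |-2 * Real.sin ((a+b)/2) * Real.sin ((a-b)/2)|
      = 2 * |Real.sin ((a+b)/2)| * |Real.sin ((a-b)/2)| := by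
        rw [abs_mul, abs_mul]; norm_num
    _ ≤ 2 * 1 * |(a-b)/2| := by
        apply mul_le_mul _ Real.abs_sin_le_abs (abs_nonneg _) (by positivity)
        exact mul_le_mul_of_nonneg_left (Real.abs_sin_le_one _) (by norm_num)
    _ = 2 * (|a - b| / 2) := by rw [abs_div, abs_two]; ring
    _ = |a - b| := by ring

lemma aux_exp_poly (κ : ℝ) (hκ : 0 ≤ κ) :
    ∃ A > (0:ℝ), ∀ x : ℝ, 0 ≤ x → (1 + x) ^ κ ≤ A * Real.exp x := by
  set M : ℕ := ⌈κ⌉₊ + 1 with hM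
  refine ⟨(M:ℝ)^M, by positivity, ?_⟩
  intro x hx
  have hM1 : (1:ℝ) ≤ M := by exact_mod_cast Nat.one_le_iff_ne_zero.mpr (by simp [hM])
  have hM0 : (0:ℝ) < M := by linarith
  have hxM : 0 ≤ x / M := div_nonneg hx hM0.le
  have h1 : (1+x) ^ κ ≤ (1+x) ^ (M:ℝ) := by
    apply Real.rpow_le_rpow_of_exponent_le (by linarith)
    calc κ ≤ (⌈κ⌉₊ : ℝ) := Nat.le_ceil κ
      _ ≤ M := by rw [hM]; push_cast; linarith
  rw [Real.rpow_natCast] at h1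
  have h2 : (1+x)^M ≤ ((M:ℝ) * (1 + x/M))^M := by
    apply pow_le_pow_left₀ (by linarith)
    have he : (M:ℝ) * (1 + x/M) = M + x := by field_simp
    rw [he]; linarith
  have h4 : ((M:ℝ) * (1 + x/M))^M ≤ (M:ℝ)^M * Real.exp (x/M) ^ M := by
    rw [mul_pow]
    apply mul_le_mul_of_nonneg_left _ (by positivity)
    apply pow_le_pow_left₀ (by linarith)
    linarith [Real.add_one_le_exp (x/M)]
  have h5 : Real.exp (x/M) ^ M = Real.exp x := by
    rw [← Real.exp_nat_mul]; congr 1; field_simp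
  calc (1+x)^κ ≤ ((1:ℝ)+x)^M := h1
    _ ≤ (M:ℝ)^M * Real.exp (x/M) ^ M := le_trans h2 h4
    _ = (M:ℝ)^M * Real.exp x := by rw [h5]

lemma aux_decay (κ : ℝ) (hκ : 0 ≤ κ) :
    ∃ A > (0:ℝ), ∀ P : ℝ, 1 ≤ P → ∀ t : ℝ, 0 ≤ t →
      Real.exp (-t/P) ≤ A * P ^ κ * (1+t) ^ (-κ) := by
  obtain ⟨A, hA, hA2⟩ := aux_exp_poly κ hκ
  refine ⟨A, hA, ?_⟩
  intro P hP t ht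
  have hP0 : (0:ℝ) < P := by linarith
  have ht1 : (0:ℝ) < 1 + t := by linarith
  have hx : 0 ≤ t/P := div_nonneg ht hP0.le
  have h1 : 1 + t ≤ P * (1 + t/P) := by
    have : P * (1 + t/P) = P + t := by field_simp
    rw [this]; linarith
  have h2 : (1+t) ^ κ ≤ P ^ κ * (1+t/P) ^ κ := by
    rw [← Real.mul_rpow hP0.le (by linarith)]
    exact Real.rpow_le_rpow ht1.le h1 hκ
  have h5 : (1+t) ^ κ * Real.exp (-t/P) ≤ A * P ^ κ := by
    calc (1+t)^κ * Real.exp (-t/P)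
        ≤ (P^κ * (A * Real.exp (t/P))) * Real.exp (-t/P) := by
          apply mul_le_mul_of_nonneg_right _ (Real.exp_nonneg _)
          exact le_trans h2 (mul_le_mul_of_nonneg_left (hA2 _ hx) (Real.rpow_nonneg hP0.le _))
      _ = A * P^κ * (Real.exp (t/P) * Real.exp (-t/P)) := by ring
      _ = A * P^κ := by rw [← Real.exp_add]; simp [neg_div]
  have h6 : Real.exp (-t/P) = (1+t)^κ * Real.exp (-t/P) * (1+t)^(-κ) := by
    rw [mul_comm ((1+t)^κ), mul_assoc, ← Real.rpow_add ht1]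
    simp
  rw [h6]
  exact mul_le_mul_of_nonneg_right h5 (Real.rpow_nonneg ht1.le _)

section MB
variable (r t : ℝ)

lemma basic_facts (hr : 1 ≤ r) (ht : 0 ≤ t) :
    True := trivial

lemma M1_bound (hr : 1 ≤ r) (ht : 0 ≤ t) :
    |Real.exp (-t / (2 * (1 + r ^ 2))) *
        (Real.sin (t * Real.sqrt (4 * r ^ 2 * (1 + r ^ 2) ^ 2 - 1) / (2 * (1 + r ^ 2))) /
          (Real.sqrt (4 * r ^ 2 * (1 + r ^ 2) ^ 2 - 1) / (2 * (1 + r ^ 2)))) -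
      Real.exp (-t / (2 * r ^ 2)) * (Real.sin (t * r) / r)| ≤
    2 * (1 + t) * Real.exp (-t / (2 * (1 + r ^ 2))) / r ^ 5 := by
  have hr0 : (0:ℝ) < r := by linarith
  have hr2 : (1:ℝ) ≤ r ^ 2 := by nlinarith
  have hw : (0:ℝ) < 1 + r ^ 2 := by linarith
  set s := Real.sqrt (4 * r ^ 2 * (1 + r ^ 2) ^ 2 - 1) with hsdef
  have hSpos : (15:ℝ) ≤ 4 * r ^ 2 * (1 + r ^ 2) ^ 2 - 1 := by nlinarith
  have hs0 : 0 ≤ s := Real.sqrt_nonneg _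
  have hs2 : s ^ 2 = 4 * r ^ 2 * (1 + r ^ 2) ^ 2 - 1 := Real.sq_sqrt (by linarith)
  set ω := s / (2 * (1 + r ^ 2)) with hωdef
  have hq4 : (0:ℝ) < 4 * (1 + r ^ 2) ^ 2 := by positivity
  have hω2 : ω ^ 2 * (4 * (1 + r ^ 2) ^ 2) = 4 * r ^ 2 * (1 + r ^ 2) ^ 2 - 1 := by
    rw [hωdef, div_pow, hs2, show (2 * (1 + r ^ 2)) ^ 2 = 4 * (1 + r ^ 2) ^ 2 by ring]
    exact div_mul_cancel₀ _ (ne_of_gt hq4)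
  have hspos : 0 < s := by nlinarith [hs0, hs2]
  have hω0 : 0 < ω := div_pos hspos (by linarith)
  have hω2r : ω ^ 2 ≤ r ^ 2 := by nlinarith [hω2, hq4]
  have hωr : ω ≤ r := by nlinarith [hω2r, hω0, hr0]
  have h1r : (1:ℝ) ≤ r ^ 2 * (1 + r ^ 2) ^ 2 := by nlinarith [hr2]
  have h3r : 3 * r ^ 2 * (1 + r ^ 2) ^ 2 ≤ ω ^ 2 * (4 * (1 + r ^ 2) ^ 2) := by
    nlinarith [hω2, h1r]
  have h34 : 3 * r ^ 2 ≤ 4 * ω ^ 2 := by nlinarith [h3r, sq_nonneg (1 + r ^ 2), hw]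
  have hrω : r ≤ 2 * ω := by nlinarith [h34, hω0, hr0]
  have hsub0 : 0 ≤ r - ω := by linarith
  have hsub : r - ω ≤ 1 / (4 * r ^ 5) := by
    have key : (r - ω) * ((r + ω) * (4 * (1 + r ^ 2) ^ 2)) = 1 := by
      linear_combination -hω2
    have h4 : 4 * r ^ 5 ≤ (r + ω) * (4 * (1 + r ^ 2) ^ 2) := by nlinarith [hω0.le, hr0.le, hr2]
    rw [le_div_iff₀ (by positivity)]
    calc (r - ω) * (4 * r ^ 5) ≤ (r - ω) * ((r + ω) * (4 * (1 + r ^ 2) ^ 2)) :=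
          mul_le_mul_of_nonneg_left h4 hsub0
      _ = 1 := key
  set E := Real.exp (-t / (2 * (1 + r ^ 2))) with hEdef
  set F := Real.exp (-t / (2 * r ^ 2)) with hFdef
  have hE0 : 0 < E := Real.exp_pos _
  have hF0 : 0 < F := Real.exp_pos _
  have hFE : F ≤ E := by
    rw [hEdef, hFdef, Real.exp_le_exp]
    rw [div_le_div_iff₀ (by positivity) (by positivity)]
    nlinarith [mul_nonneg ht (sq_nonneg r)]
  have hEF : E - F ≤ E * (t / (2 * r ^ 4)) := by
    have hδ : F = E * Real.exp (-(t / (2 * r ^ 2) - t / (2 * (1 + r ^ 2)))) := by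
      rw [hEdef, hFdef, ← Real.exp_add]; congr 1; ring
    have hδeq : t / (2 * r ^ 2) - t / (2 * (1 + r ^ 2)) = t / (2 * r ^ 2 * (1 + r ^ 2)) := by
      field_simp; ring
    have h2 : t / (2 * r ^ 2 * (1 + r ^ 2)) ≤ t / (2 * r ^ 4) := by
      rw [div_le_div_iff₀ (by positivity) (by positivity)]
      nlinarith [mul_nonneg ht (sq_nonneg r), mul_nonneg (mul_nonneg ht (sq_nonneg r)) (sq_nonneg r)]
    have h1 := Real.add_one_le_exp (-(t / (2 * r ^ 2) - t / (2 * (1 + r ^ 2))))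
    calc E - F = E * (1 - Real.exp (-(t / (2 * r ^ 2) - t / (2 * (1 + r ^ 2))))) := by
          rw [hδ]; ring
      _ ≤ E * (t / (2 * r ^ 2 * (1 + r ^ 2))) := by
          apply mul_le_mul_of_nonneg_left _ hE0.le
          rw [← hδeq]; linarith
      _ ≤ E * (t / (2 * r ^ 4)) := mul_le_mul_of_nonneg_left h2 hE0.le
  have hsd : |Real.sin (t * ω) - Real.sin (t * r)| ≤ t * (r - ω) := by
    refine le_trans (_root_.abs_sin_sub_sin_le _ _) ?_
    rw [show t * ω - t * r = -(t * (r - ω)) by ring, abs_neg,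
      abs_of_nonneg (by nlinarith)]
  have hinv : 1 / ω ≤ 2 / r := by
    rw [div_le_div_iff₀ hω0 hr0]; linarith
  have harg : t * s / (2 * (1 + r ^ 2)) = t * ω := by rw [hωdef]; ring
  have hdec : E * (Real.sin (t * s / (2 * (1 + r ^ 2))) / ω) - F * (Real.sin (t * r) / r) =
      (E - F) * (Real.sin (t * ω) / ω) + F * ((Real.sin (t * ω) - Real.sin (t * r)) / ω)
        + F * (Real.sin (t * r) * (1 / ω - 1 / r)) := by
    rw [harg]; field_simp; ring
  rw [hdec]
  have hX : |(E - F) * (Real.sin (t * ω) / ω)| ≤ E * (t / (2 * r ^ 4)) * (2 / r) := by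
    rw [abs_mul, abs_div, abs_of_pos hω0, abs_of_nonneg (by linarith : (0:ℝ) ≤ E - F)]
    apply mul_le_mul hEF _ (by positivity) (by positivity)
    rw [div_le_div_iff₀ hω0 hr0]
    nlinarith [Real.abs_sin_le_one (t * ω), abs_nonneg (Real.sin (t * ω))]
  have hY : |F * ((Real.sin (t * ω) - Real.sin (t * r)) / ω)| ≤ E * (t / (4 * r ^ 5) * (2 / r)) := by
    rw [abs_mul, abs_div, abs_of_pos hω0, abs_of_pos hF0]
    apply mul_le_mul hFE _ (by positivity) hE0.le
    have h1 : |Real.sin (t * ω) - Real.sin (t * r)| ≤ t / (4 * r ^ 5) := by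
      refine le_trans hsd ?_
      calc t * (r - ω) ≤ t * (1 / (4 * r ^ 5)) := mul_le_mul_of_nonneg_left hsub ht
        _ = t / (4 * r ^ 5) := by ring
    calc |Real.sin (t * ω) - Real.sin (t * r)| / ω
        = |Real.sin (t * ω) - Real.sin (t * r)| * (1 / ω) := by ring
      _ ≤ (t / (4 * r ^ 5)) * (2 / r) := by
          apply mul_le_mul h1 hinv (by positivity) (by positivity)
  have hZ : |F * (Real.sin (t * r) * (1 / ω - 1 / r))| ≤ E * (1 / (4 * r ^ 5) * (2 / r ^ 2)) := by
    rw [abs_mul, abs_mul]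
    have hgap : 0 ≤ 1 / ω - 1 / r := by
      rw [sub_nonneg, div_le_div_iff₀ hr0 hω0]; linarith
    rw [abs_of_pos hF0, abs_of_nonneg hgap]
    apply mul_le_mul hFE _ (by positivity) hE0.le
    have h1 : 1 / ω - 1 / r = (r - ω) * (1 / (ω * r)) := by field_simp
    have h2 : 1 / (ω * r) ≤ 2 / r ^ 2 := by
      rw [div_le_div_iff₀ (by positivity) (by positivity)]
      nlinarith
    calc |Real.sin (t * r)| * (1 / ω - 1 / r) ≤ 1 * (1 / ω - 1 / r) := by
          apply mul_le_mul_of_nonneg_right (Real.abs_sin_le_one _) hgap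
      _ = (r - ω) * (1 / (ω * r)) := by rw [← h1]; ring
      _ ≤ 1 / (4 * r ^ 5) * (2 / r ^ 2) := mul_le_mul hsub h2 (by positivity) (by positivity)
  have harith : t / (2 * r ^ 4) * (2 / r) + t / (4 * r ^ 5) * (2 / r) + 1 / (4 * r ^ 5) * (2 / r ^ 2)
      ≤ 2 * (1 + t) / r ^ 5 := by
    have hp56 : r ^ 5 ≤ r ^ 6 := by
      nlinarith [mul_nonneg (pow_nonneg hr0.le 5) (sub_nonneg.2 hr)]
    have hp57 : r ^ 5 ≤ r ^ 7 := by
      nlinarith [mul_nonneg (pow_nonneg hr0.le 5) (sub_nonneg.2 hr2 : (0:ℝ) ≤ r ^ 2 - 1)]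
    have e1 : t / (2 * r ^ 4) * (2 / r) = t / r ^ 5 := by
      field_simp
    have e2 : t / (4 * r ^ 5) * (2 / r) = t / 2 / r ^ 6 := by
      field_simp; ring
    have e3 : 1 / (4 * r ^ 5) * (2 / r ^ 2) = (1:ℝ) / 2 / r ^ 7 := by
      field_simp; ring
    have le2 : t / 2 / r ^ 6 ≤ t / 2 / r ^ 5 := by
      apply div_le_div_of_nonneg_left (by linarith) (by positivity) hp56
    have le3 : (1:ℝ) / 2 / r ^ 7 ≤ (1:ℝ) / 2 / r ^ 5 := by
      apply div_le_div_of_nonneg_left (by norm_num) (by positivity) hp57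
    rw [e1, e2, e3]
    have : t / r ^ 5 + t / 2 / r ^ 5 + 1 / 2 / r ^ 5 = (t + t / 2 + 1 / 2) / r ^ 5 := by ring
    calc t / r ^ 5 + t / 2 / r ^ 6 + 1 / 2 / r ^ 7
        ≤ t / r ^ 5 + t / 2 / r ^ 5 + 1 / 2 / r ^ 5 := by linarith
      _ = (t + t / 2 + 1 / 2) / r ^ 5 := this
      _ ≤ 2 * (1 + t) / r ^ 5 := by
          gcongr
          linarith
  calc |(E - F) * (Real.sin (t * ω) / ω) + F * ((Real.sin (t * ω) - Real.sin (t * r)) / ω)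
        + F * (Real.sin (t * r) * (1 / ω - 1 / r))|
      ≤ |(E - F) * (Real.sin (t * ω) / ω)| + |F * ((Real.sin (t * ω) - Real.sin (t * r)) / ω)|
        + |F * (Real.sin (t * r) * (1 / ω - 1 / r))| := abs_add_three _ _ _
    _ ≤ E * (t / (2 * r ^ 4)) * (2 / r) + E * (t / (4 * r ^ 5) * (2 / r))
        + E * (1 / (4 * r ^ 5) * (2 / r ^ 2)) := by
        exact add_le_add (add_le_add hX hY) hZ
    _ = E * (t / (2 * r ^ 4) * (2 / r) + t / (4 * r ^ 5) * (2 / r) + 1 / (4 * r ^ 5) * (2 / r ^ 2)) := by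
        ring
    _ ≤ E * (2 * (1 + t) / r ^ 5) := mul_le_mul_of_nonneg_left harith hE0.le
    _ = 2 * (1 + t) * E / r ^ 5 := by ring


lemma M0_bound (hr : 1 ≤ r) (ht : 0 ≤ t) :
    |Real.exp (-t / (2 * (1 + r ^ 2))) *
        Real.cos (t * Real.sqrt (4 * r ^ 2 * (1 + r ^ 2) ^ 2 - 1) / (2 * (1 + r ^ 2))) +
      1 / (2 * (1 + r ^ 2)) *
        (Real.exp (-t / (2 * (1 + r ^ 2))) *
          (Real.sin (t * Real.sqrt (4 * r ^ 2 * (1 + r ^ 2) ^ 2 - 1) / (2 * (1 + r ^ 2))) /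
            (Real.sqrt (4 * r ^ 2 * (1 + r ^ 2) ^ 2 - 1) / (2 * (1 + r ^ 2))))) -
      Real.exp (-t / (2 * r ^ 2)) * Real.cos (t * r)| ≤
    (1 + t) * Real.exp (-t / (2 * (1 + r ^ 2))) / r ^ 4 +
      Real.exp (-t / (2 * (1 + r ^ 2))) / (r * (1 + r ^ 2)) := by
  have hr0 : (0:ℝ) < r := by linarith
  have hr2 : (1:ℝ) ≤ r ^ 2 := by nlinarith
  have hw : (0:ℝ) < 1 + r ^ 2 := by linarith
  set s := Real.sqrt (4 * r ^ 2 * (1 + r ^ 2) ^ 2 - 1) with hsdef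
  have hSpos : (15:ℝ) ≤ 4 * r ^ 2 * (1 + r ^ 2) ^ 2 - 1 := by nlinarith
  have hs0 : 0 ≤ s := Real.sqrt_nonneg _
  have hs2 : s ^ 2 = 4 * r ^ 2 * (1 + r ^ 2) ^ 2 - 1 := Real.sq_sqrt (by linarith)
  set ω := s / (2 * (1 + r ^ 2)) with hωdef
  have hq4 : (0:ℝ) < 4 * (1 + r ^ 2) ^ 2 := by positivity
  have hω2 : ω ^ 2 * (4 * (1 + r ^ 2) ^ 2) = 4 * r ^ 2 * (1 + r ^ 2) ^ 2 - 1 := by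
    rw [hωdef, div_pow, hs2, show (2 * (1 + r ^ 2)) ^ 2 = 4 * (1 + r ^ 2) ^ 2 by ring]
    exact div_mul_cancel₀ _ (ne_of_gt hq4)
  have hspos : 0 < s := by nlinarith [hs0, hs2]
  have hω0 : 0 < ω := div_pos hspos (by linarith)
  have hω2r : ω ^ 2 ≤ r ^ 2 := by nlinarith [hω2, hq4]
  have hωr : ω ≤ r := by nlinarith [hω2r, hω0, hr0]
  have h1r : (1:ℝ) ≤ r ^ 2 * (1 + r ^ 2) ^ 2 := by nlinarith [hr2]
  have h3r : 3 * r ^ 2 * (1 + r ^ 2) ^ 2 ≤ ω ^ 2 * (4 * (1 + r ^ 2) ^ 2) := by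
    nlinarith [hω2, h1r]
  have h34 : 3 * r ^ 2 ≤ 4 * ω ^ 2 := by nlinarith [h3r, sq_nonneg (1 + r ^ 2), hw]
  have hrω : r ≤ 2 * ω := by nlinarith [h34, hω0, hr0]
  have hsub0 : 0 ≤ r - ω := by linarith
  have hsub : r - ω ≤ 1 / (4 * r ^ 5) := by
    have key : (r - ω) * ((r + ω) * (4 * (1 + r ^ 2) ^ 2)) = 1 := by
      linear_combination -hω2
    have h4 : 4 * r ^ 5 ≤ (r + ω) * (4 * (1 + r ^ 2) ^ 2) := by nlinarith [hω0.le, hr0.le, hr2]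
    rw [le_div_iff₀ (by positivity)]
    calc (r - ω) * (4 * r ^ 5) ≤ (r - ω) * ((r + ω) * (4 * (1 + r ^ 2) ^ 2)) :=
          mul_le_mul_of_nonneg_left h4 hsub0
      _ = 1 := key
  set E := Real.exp (-t / (2 * (1 + r ^ 2))) with hEdef
  set F := Real.exp (-t / (2 * r ^ 2)) with hFdef
  have hE0 : 0 < E := Real.exp_pos _
  have hF0 : 0 < F := Real.exp_pos _
  have hFE : F ≤ E := by
    rw [hEdef, hFdef, Real.exp_le_exp]
    rw [div_le_div_iff₀ (by positivity) (by positivity)]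
    nlinarith [mul_nonneg ht (sq_nonneg r)]
  have hEF : E - F ≤ E * (t / (2 * r ^ 4)) := by
    have hδ : F = E * Real.exp (-(t / (2 * r ^ 2) - t / (2 * (1 + r ^ 2)))) := by
      rw [hEdef, hFdef, ← Real.exp_add]; congr 1; ring
    have hδeq : t / (2 * r ^ 2) - t / (2 * (1 + r ^ 2)) = t / (2 * r ^ 2 * (1 + r ^ 2)) := by
      field_simp; ring
    have h2 : t / (2 * r ^ 2 * (1 + r ^ 2)) ≤ t / (2 * r ^ 4) := by
      rw [div_le_div_iff₀ (by positivity) (by positivity)]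
      nlinarith [mul_nonneg ht (sq_nonneg r), mul_nonneg (mul_nonneg ht (sq_nonneg r)) (sq_nonneg r)]
    have h1 := Real.add_one_le_exp (-(t / (2 * r ^ 2) - t / (2 * (1 + r ^ 2))))
    calc E - F = E * (1 - Real.exp (-(t / (2 * r ^ 2) - t / (2 * (1 + r ^ 2))))) := by
          rw [hδ]; ring
      _ ≤ E * (t / (2 * r ^ 2 * (1 + r ^ 2))) := by
          apply mul_le_mul_of_nonneg_left _ hE0.le
          rw [← hδeq]; linarith
      _ ≤ E * (t / (2 * r ^ 4)) := mul_le_mul_of_nonneg_left h2 hE0.le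
  have hcd : |Real.cos (t * ω) - Real.cos (t * r)| ≤ t * (r - ω) := by
    refine le_trans (_root_.abs_cos_sub_cos_le _ _) ?_
    rw [show t * ω - t * r = -(t * (r - ω)) by ring, abs_neg,
      abs_of_nonneg (by nlinarith)]
  have hinv : 1 / ω ≤ 2 / r := by
    rw [div_le_div_iff₀ hω0 hr0]; linarith
  have harg : t * s / (2 * (1 + r ^ 2)) = t * ω := by rw [hωdef]; ring
  have hdec : E * Real.cos (t * s / (2 * (1 + r ^ 2)))
        + 1 / (2 * (1 + r ^ 2)) * (E * (Real.sin (t * s / (2 * (1 + r ^ 2))) / ω))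
        - F * Real.cos (t * r) =
      (E - F) * Real.cos (t * ω) + F * (Real.cos (t * ω) - Real.cos (t * r))
        + E * (Real.sin (t * ω) / (ω * (2 * (1 + r ^ 2)))) := by
    rw [harg]; field_simp; ring
  rw [hdec]
  have hX : |(E - F) * Real.cos (t * ω)| ≤ E * (t / (2 * r ^ 4)) := by
    rw [abs_mul, abs_of_nonneg (by linarith : (0:ℝ) ≤ E - F)]
    calc (E - F) * |Real.cos (t * ω)| ≤ (E - F) * 1 :=
          mul_le_mul_of_nonneg_left (Real.abs_cos_le_one _) (by linarith)
      _ = E - F := by ring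
      _ ≤ E * (t / (2 * r ^ 4)) := hEF
  have hY : |F * (Real.cos (t * ω) - Real.cos (t * r))| ≤ E * (t / (4 * r ^ 5)) := by
    rw [abs_mul, abs_of_pos hF0]
    apply mul_le_mul hFE _ (abs_nonneg _) hE0.le
    refine le_trans hcd ?_
    calc t * (r - ω) ≤ t * (1 / (4 * r ^ 5)) := mul_le_mul_of_nonneg_left hsub ht
      _ = t / (4 * r ^ 5) := by ring
  have hZ : |E * (Real.sin (t * ω) / (ω * (2 * (1 + r ^ 2))))| ≤ E * (1 / (r * (1 + r ^ 2))) := by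
    rw [abs_mul, abs_of_pos hE0, abs_div, abs_of_pos (by positivity : 0 < ω * (2 * (1 + r ^ 2)))]
    apply mul_le_mul_of_nonneg_left _ hE0.le
    rw [div_le_div_iff₀ (by positivity) (by positivity)]
    calc |Real.sin (t * ω)| * (r * (1 + r ^ 2)) ≤ 1 * (r * (1 + r ^ 2)) := by
          apply mul_le_mul_of_nonneg_right (Real.abs_sin_le_one _) (by positivity)
      _ ≤ 1 * (ω * (2 * (1 + r ^ 2))) := by nlinarith [hrω, hw]
  have harith : E * (t / (2 * r ^ 4)) + E * (t / (4 * r ^ 5)) ≤ (1 + t) * E / r ^ 4 := by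
    have h5 : t / (4 * r ^ 5) ≤ t / (4 * r ^ 4) := by
      apply div_le_div_of_nonneg_left ht (by positivity)
      nlinarith [mul_nonneg (pow_nonneg hr0.le 4) (sub_nonneg.2 hr)]
    have : t / (2 * r ^ 4) + t / (4 * r ^ 4) = (3 * t / 4) / r ^ 4 := by ring
    calc E * (t / (2 * r ^ 4)) + E * (t / (4 * r ^ 5))
        ≤ E * (t / (2 * r ^ 4)) + E * (t / (4 * r ^ 4)) := by
          have := mul_le_mul_of_nonneg_left h5 hE0.le; linarith
      _ = E * ((3 * t / 4) / r ^ 4) := by rw [← this]; ring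
      _ ≤ E * ((1 + t) / r ^ 4) := by
          apply mul_le_mul_of_nonneg_left _ hE0.le
          gcongr
          linarith
      _ = (1 + t) * E / r ^ 4 := by ring
  calc |(E - F) * Real.cos (t * ω) + F * (Real.cos (t * ω) - Real.cos (t * r))
        + E * (Real.sin (t * ω) / (ω * (2 * (1 + r ^ 2))))|
      ≤ |(E - F) * Real.cos (t * ω)| + |F * (Real.cos (t * ω) - Real.cos (t * r))|
        + |E * (Real.sin (t * ω) / (ω * (2 * (1 + r ^ 2))))| := abs_add_three _ _ _
    _ ≤ (E * (t / (2 * r ^ 4)) + E * (t / (4 * r ^ 5))) + E * (1 / (r * (1 + r ^ 2))) := by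
        exact add_le_add (add_le_add hX hY) hZ
    _ ≤ (1 + t) * E / r ^ 4 + E / (r * (1 + r ^ 2)) := by
        have : E * (1 / (r * (1 + r ^ 2))) = E / (r * (1 + r ^ 2)) := by ring
        linarith [harith]

end MB

lemma sq_add_le (x y : ℝ) : (x+y)^2 ≤ 2*x^2 + 2*y^2 := by nlinarith [sq_nonneg (x-y)]

lemma pointwise_bound (n : ℕ) (l : ℝ) (hl : 0 ≤ l) (ζ : ℝ) (hζ : zetaCond ζ) :
    ∃ K > (0:ℝ), ∀ (v₀ v₁ : Rn n → ℂ) (t : ℝ), 0 ≤ t → ∀ ξ : Rn n, 1 ≤ ‖ξ‖ →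
      ‖uhatC ζ v₀ v₁ t ξ - waveC v₀ v₁ t ξ‖ ^ 2 ≤
        K * ((1 + ‖ξ‖ ^ 2) ^ l * ‖v₁ ξ‖ ^ 2 + (1 + ‖ξ‖ ^ 2) ^ (l + 1) * ‖v₀ ξ‖ ^ 2) *
          (1 + t) ^ (-l - 3) := by
  obtain ⟨A, hA, hAd⟩ := aux_decay ((l+3)/2) (by linarith)
  obtain ⟨A', hA', hAd'⟩ := aux_decay ((l+3)/2 + 1) (by linarith)
  set κ := (l+3)/2 with hκdef
  set K₁ : ℝ := 2 * A' * 2 ^ (κ+1) * 2 ^ ((5:ℝ)/2) with hK₁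
  set K₀ : ℝ := A' * 2 ^ (κ+1) * 4 + A * 2 ^ κ with hK₀
  have hK₁0 : 0 < K₁ := by rw [hK₁]; positivity
  have hK₀0 : 0 < K₀ := by rw [hK₀]; positivity
  refine ⟨2 * K₀^2 + 2 * K₁^2, by positivity, ?_⟩
  intro v₀ v₁ t ht ξ hξ
  set r := ‖ξ‖ with hrdef
  have hr0 : (0:ℝ) < r := by linarith
  have hw : (0:ℝ) < 1 + r^2 := by positivity
  have hr2 : (1:ℝ) ≤ r ^ 2 := by
    calc (1:ℝ) = 1^2 := by norm_num
      _ ≤ r^2 := by gcongr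
  have h1t : (0:ℝ) < 1 + t := by linarith
  have hbr : ζ < r := lt_of_lt_of_le hζ.2.1 hξ
  set M0v : ℝ := E0 ζ t ξ + 1/(2*(1+r^2)) * E1 ζ t ξ
      - Real.exp (-t/(2*r^2)) * Real.cos (t*r) with hM0v
  set M1v : ℝ := E1 ζ t ξ - Real.exp (-t/(2*r^2)) * (Real.sin (t*r)/r) with hM1v
  have hkey : uhatC ζ v₀ v₁ t ξ - waveC v₀ v₁ t ξ = v₀ ξ * (M0v:ℂ) + v₁ ξ * (M1v:ℂ) := by
    rw [hM0v, hM1v]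
    simp only [uhatC, waveC, ← hrdef]
    push_cast
    ring
  have hnb : ‖uhatC ζ v₀ v₁ t ξ - waveC v₀ v₁ t ξ‖ ≤ ‖v₀ ξ‖ * |M0v| + ‖v₁ ξ‖ * |M1v| := by
    rw [hkey]
    refine le_trans (norm_add_le _ _) ?_
    rw [norm_mul, norm_mul, Complex.norm_real, Complex.norm_real,
      Real.norm_eq_abs, Real.norm_eq_abs]
  set E := Real.exp (-t / (2 * (1 + r ^ 2))) with hEdef
  have hE0 : 0 < E := Real.exp_pos _
  have hM1b : |M1v| ≤ 2 * (1 + t) * E / r ^ 5 := by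
    rw [hM1v]
    simp only [E1, if_pos hbr, ← hrdef]
    exact M1_bound r t hξ ht
  have hM0b : |M0v| ≤ (1 + t) * E / r ^ 4 + E / (r * (1 + r ^ 2)) := by
    rw [hM0v]
    simp only [E0, E1, if_pos hbr, ← hrdef]
    exact M0_bound r t hξ ht
  -- decay estimates
  have hwP : (1:ℝ) ≤ 2*(1+r^2) := by linarith [sq_nonneg r]
  have hD1 := hAd (2*(1+r^2)) hwP t ht
  have hD2 := hAd' (2*(1+r^2)) hwP t ht
  set τ := (1+t) ^ (-κ) with hτdef
  have hτ0 : 0 ≤ τ := Real.rpow_nonneg h1t.le _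
  have hshift : (1+t) * ((1+t:ℝ) ^ (-(κ+1))) = τ := by
    rw [hτdef, show -κ = 1 + (-(κ+1)) by ring, Real.rpow_add h1t, Real.rpow_one]
  have hD2' : (1+t) * E ≤ A' * (2*(1+r^2))^(κ+1) * τ := by
    calc (1+t) * E ≤ (1+t) * (A' * (2*(1+r^2))^(κ+1) * (1+t)^(-(κ+1))) :=
          mul_le_mul_of_nonneg_left hD2 (by linarith)
      _ = A' * (2*(1+r^2))^(κ+1) * ((1+t) * (1+t)^(-(κ+1))) := by ring
      _ = A' * (2*(1+r^2))^(κ+1) * τ := by rw [hshift]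
  have hD1' : E ≤ A * (2*(1+r^2))^κ * τ := hD1
  -- rpow algebra
  have hP1 : (2*(1+r^2)) ^ (κ+1) = 2^(κ+1) * (1+r^2)^(κ+1) := Real.mul_rpow (by norm_num) hw.le
  have hPκ : (2*(1+r^2)) ^ κ = 2^κ * (1+r^2)^κ := Real.mul_rpow (by norm_num) hw.le
  have hws1 : (1+r^2)^(κ+1) = (1+r^2)^(l/2) * (1+r^2)^((5:ℝ)/2) := by
    rw [← Real.rpow_add hw]; congr 1; rw [hκdef]; ring
  have hws0 : (1+r^2)^(κ+1) = (1+r^2)^((l+1)/2) * (1+r^2)^((2:ℝ)) := by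
    rw [← Real.rpow_add hw]; congr 1; rw [hκdef]; ring
  have hwsκ : (1+r^2)^κ = (1+r^2)^((l+1)/2) * (1+r^2)^((1:ℝ)) := by
    rw [← Real.rpow_add hw]; congr 1; rw [hκdef]; ring
  have h52 : (1+r^2) ^ ((5:ℝ)/2) ≤ 2^((5:ℝ)/2) * r^5 := by
    have h1 : (1+r^2) ≤ 2*r^2 := by linarith [hr2]
    have h2 : (1+r^2)^((5:ℝ)/2) ≤ (2*r^2)^((5:ℝ)/2) :=
      Real.rpow_le_rpow hw.le h1 (by norm_num)
    have h3 : (2*r^2 : ℝ)^((5:ℝ)/2) = 2^((5:ℝ)/2) * (r^2)^((5:ℝ)/2) :=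
      Real.mul_rpow (by norm_num) (by positivity)
    have h4 : ((r:ℝ)^2)^((5:ℝ)/2) = r^5 := by
      rw [← Real.rpow_natCast r 2, ← Real.rpow_mul hr0.le,
        show ((2:ℕ):ℝ) * ((5:ℝ)/2) = ((5:ℕ):ℝ) by push_cast; ring, Real.rpow_natCast]
    rw [h3, h4] at h2; exact h2
  have hw2 : ((1+r^2):ℝ)^((2:ℝ)) ≤ 4 * r^4 := by
    have h4 : ((1+r^2):ℝ)^((2:ℝ)) = (1+r^2)^(2:ℕ) := by
      rw [← Real.rpow_natCast (1+r^2) 2]; norm_num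
    rw [h4]; nlinarith [hr2, sq_nonneg r, sq_nonneg (r^2 - 1)]
  have hw1 : ((1+r^2):ℝ)^((1:ℝ)) = 1+r^2 := Real.rpow_one _
  -- M1 final
  have hM1f : |M1v| ≤ K₁ * (1+r^2)^(l/2) * τ := by
    calc |M1v| ≤ 2 * (1 + t) * E / r ^ 5 := hM1b
      _ = 2 * ((1+t) * E) / r^5 := by ring
      _ ≤ 2 * (A' * (2*(1+r^2))^(κ+1) * τ) / r^5 := by gcongr
      _ = 2 * A' * 2^(κ+1) * ((1+r^2)^(l/2) * ((1+r^2)^((5:ℝ)/2) / r^5)) * τ := by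
          rw [hP1, hws1]; ring
      _ ≤ 2 * A' * 2^(κ+1) * ((1+r^2)^(l/2) * 2^((5:ℝ)/2)) * τ := by
          have hd : (1+r^2)^((5:ℝ)/2) / r^5 ≤ 2^((5:ℝ)/2) := by
            rw [div_le_iff₀ (by positivity)]
            calc (1+r^2)^((5:ℝ)/2) ≤ 2^((5:ℝ)/2) * r^5 := h52
              _ = 2^((5:ℝ)/2) * r^5 := rfl
          gcongr
      _ = K₁ * (1+r^2)^(l/2) * τ := by rw [hK₁]; ring
  -- M0 final
  have hM0f : |M0v| ≤ K₀ * (1+r^2)^((l+1)/2) * τ := by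
    have ht1 : (1 + t) * E / r ^ 4 ≤ A' * 2^(κ+1) * 4 * (1+r^2)^((l+1)/2) * τ := by
      calc (1+t) * E / r^4 ≤ (A' * (2*(1+r^2))^(κ+1) * τ) / r^4 := by gcongr
        _ = A' * 2^(κ+1) * ((1+r^2)^((l+1)/2) * ((1+r^2)^((2:ℝ)) / r^4)) * τ := by
            rw [hP1, hws0]; ring
        _ ≤ A' * 2^(κ+1) * ((1+r^2)^((l+1)/2) * 4) * τ := by
            have hd : (1+r^2)^((2:ℝ)) / r^4 ≤ 4 := by
              rw [div_le_iff₀ (by positivity)]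
              calc ((1+r^2):ℝ)^((2:ℝ)) ≤ 4 * r^4 := hw2
                _ = 4 * r^4 := rfl
            gcongr
        _ = A' * 2^(κ+1) * 4 * (1+r^2)^((l+1)/2) * τ := by ring
    have ht2 : E / (r * (1+r^2)) ≤ A * 2^κ * (1+r^2)^((l+1)/2) * τ := by
      calc E / (r * (1+r^2)) ≤ (A * (2*(1+r^2))^κ * τ) / (r * (1+r^2)) := by gcongr
        _ = A * 2^κ * ((1+r^2)^((l+1)/2) * (((1+r^2):ℝ)^((1:ℝ)) / (r * (1+r^2)))) * τ := by
            rw [hPκ, hwsκ]; ring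
        _ ≤ A * 2^κ * ((1+r^2)^((l+1)/2) * 1) * τ := by
            have hd : ((1+r^2):ℝ)^((1:ℝ)) / (r * (1+r^2)) ≤ 1 := by
              rw [hw1, div_le_one (by positivity)]
              nlinarith [hr2, hr0, hw]
            gcongr
        _ = A * 2^κ * (1+r^2)^((l+1)/2) * τ := by ring
    calc |M0v| ≤ (1 + t) * E / r ^ 4 + E / (r * (1 + r ^ 2)) := hM0b
      _ ≤ A' * 2^(κ+1) * 4 * (1+r^2)^((l+1)/2) * τ + A * 2^κ * (1+r^2)^((l+1)/2) * τ :=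
          add_le_add ht1 ht2
      _ = K₀ * (1+r^2)^((l+1)/2) * τ := by rw [hK₀]; ring
  -- assemble
  have hwl0 : (0:ℝ) ≤ (1+r^2)^(l/2) := Real.rpow_nonneg hw.le _
  have hwl1 : (0:ℝ) ≤ (1+r^2)^((l+1)/2) := Real.rpow_nonneg hw.le _
  set a := ‖v₀ ξ‖ * (K₀ * (1+r^2)^((l+1)/2) * τ) with hadef
  set b := ‖v₁ ξ‖ * (K₁ * (1+r^2)^(l/2) * τ) with hbdef
  have hnb2 : ‖uhatC ζ v₀ v₁ t ξ - waveC v₀ v₁ t ξ‖ ≤ a + b := by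
    refine le_trans hnb ?_
    rw [hadef, hbdef]
    have h1 : ‖v₀ ξ‖ * |M0v| ≤ ‖v₀ ξ‖ * (K₀ * (1+r^2)^((l+1)/2) * τ) :=
      mul_le_mul_of_nonneg_left hM0f (norm_nonneg _)
    have h2 : ‖v₁ ξ‖ * |M1v| ≤ ‖v₁ ξ‖ * (K₁ * (1+r^2)^(l/2) * τ) :=
      mul_le_mul_of_nonneg_left hM1f (norm_nonneg _)
    linarith
  have ha0 : 0 ≤ a := by rw [hadef]; positivity
  have hb0 : 0 ≤ b := by rw [hbdef]; positivity
  have hsq : ‖uhatC ζ v₀ v₁ t ξ - waveC v₀ v₁ t ξ‖ ^ 2 ≤ (a+b)^2 :=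
    pow_le_pow_left₀ (norm_nonneg _) hnb2 2
  have h2ab : (a+b)^2 ≤ 2*a^2 + 2*b^2 := sq_add_le a b
  -- rpow squares
  have hsq1 : ((1+r^2:ℝ)^(l/2))^2 = (1+r^2)^l := by
    rw [← Real.rpow_natCast ((1+r^2:ℝ)^(l/2)) 2, ← Real.rpow_mul hw.le]
    congr 1; push_cast; ring
  have hsq0 : ((1+r^2:ℝ)^((l+1)/2))^2 = (1+r^2)^(l+1) := by
    rw [← Real.rpow_natCast ((1+r^2:ℝ)^((l+1)/2)) 2, ← Real.rpow_mul hw.le]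
    congr 1; push_cast; ring
  have hsqτ : τ^2 = (1+t)^(-l-3) := by
    rw [hτdef, ← Real.rpow_natCast ((1+t:ℝ)^(-κ)) 2, ← Real.rpow_mul h1t.le]
    congr 1; rw [hκdef]; push_cast; ring
  have hT0 : (0:ℝ) ≤ (1+t)^(-l-3) := Real.rpow_nonneg h1t.le _
  have ha2 : a^2 = K₀^2 * ((1+r^2)^(l+1) * ‖v₀ ξ‖^2) * (1+t)^(-l-3) := by
    rw [hadef, ← hsq0, ← hsqτ]; ring
  have hb2 : b^2 = K₁^2 * ((1+r^2)^l * ‖v₁ ξ‖^2) * (1+t)^(-l-3) := by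
    rw [hbdef, ← hsq1, ← hsqτ]; ring
  have hX1 : (0:ℝ) ≤ (1+r^2)^l * ‖v₁ ξ‖^2 * (1+t)^(-l-3) := by positivity
  have hX0 : (0:ℝ) ≤ (1+r^2)^(l+1) * ‖v₀ ξ‖^2 * (1+t)^(-l-3) := by positivity
  calc ‖uhatC ζ v₀ v₁ t ξ - waveC v₀ v₁ t ξ‖ ^ 2 ≤ (a+b)^2 := hsq
    _ ≤ 2*a^2 + 2*b^2 := h2ab
    _ = 2*K₀^2 * ((1+r^2)^(l+1) * ‖v₀ ξ‖^2 * (1+t)^(-l-3))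
        + 2*K₁^2 * ((1+r^2)^l * ‖v₁ ξ‖^2 * (1+t)^(-l-3)) := by rw [ha2, hb2]; ring
    _ ≤ (2*K₀^2 + 2*K₁^2) * ((1+r^2)^l * ‖v₁ ξ‖^2 + (1+r^2)^(l+1) * ‖v₀ ξ‖^2) * (1+t)^(-l-3) := by
        have e : (2*K₀^2 + 2*K₁^2) * ((1+r^2)^l * ‖v₁ ξ‖^2 + (1+r^2)^(l+1) * ‖v₀ ξ‖^2) * (1+t)^(-l-3)
            = (2*K₀^2 * ((1+r^2)^(l+1) * ‖v₀ ξ‖^2 * (1+t)^(-l-3))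
                + 2*K₁^2 * ((1+r^2)^l * ‖v₁ ξ‖^2 * (1+t)^(-l-3)))
              + (2*K₀^2 * ((1+r^2)^l * ‖v₁ ξ‖^2 * (1+t)^(-l-3))
                + 2*K₁^2 * ((1+r^2)^(l+1) * ‖v₀ ξ‖^2 * (1+t)^(-l-3))) := by ring
        rw [e]
        exact le_add_of_nonneg_right (by positivity)

/-- **Lemma 4.1** (high-frequency estimate). Stated on the Fourier side: `v₀ = û₀ ∈ H^{l+1}`,
`v₁ = û₁ ∈ H^l` (i.e. their weighted squares are integrable). -/
theorem stmt_3 (n : ℕ) (hn : 1 ≤ n) (l : ℝ) (hl : 0 ≤ l)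
    (ζ : ℝ) (hζ : zetaCond ζ) :
    ∃ C > (0 : ℝ), ∀ v₀ v₁ : Rn n → ℂ,
      MemHC (l + 1) v₀ → MemHC l v₁ →
      ∀ t : ℝ, 0 ≤ t →
        (∫ ξ in {ξ : Rn n | 1 ≤ ‖ξ‖}, ‖uhatC ζ v₀ v₁ t ξ - waveC v₀ v₁ t ξ‖ ^ 2) ≤
          C * (HNormC l v₁ ^ 2 + HNormC (l + 1) v₀ ^ 2) * (1 + t) ^ (-l - 3) := by
  obtain ⟨K, hK, hpt⟩ := pointwise_bound n l hl ζ hζ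
  refine ⟨K, hK, ?_⟩
  intro v₀ v₁ h₀ h₁ t ht
  have h1t : (0:ℝ) < 1 + t := by linarith
  have hτ0 : (0:ℝ) ≤ (1+t) ^ (-l-3) := Real.rpow_nonneg h1t.le _
  set w₁ : Rn n → ℝ := fun ξ => (1 + ‖ξ‖ ^ 2) ^ l * ‖v₁ ξ‖ ^ 2 with hw₁
  set w₀ : Rn n → ℝ := fun ξ => (1 + ‖ξ‖ ^ 2) ^ (l + 1) * ‖v₀ ξ‖ ^ 2 with hw₀
  have hi₁ : Integrable w₁ := h₁
  have hi₀ : Integrable w₀ := h₀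
  have hgint : Integrable (fun ξ : Rn n => K * (w₁ ξ + w₀ ξ) * (1+t)^(-l-3)) :=
    ((hi₁.add hi₀).const_mul K).mul_const _
  have hsmeas : MeasurableSet {ξ : Rn n | 1 ≤ ‖ξ‖} :=
    (isClosed_le continuous_const continuous_norm).measurableSet
  have step1 : (∫ ξ in {ξ : Rn n | 1 ≤ ‖ξ‖}, ‖uhatC ζ v₀ v₁ t ξ - waveC v₀ v₁ t ξ‖ ^ 2) ≤
      ∫ ξ in {ξ : Rn n | 1 ≤ ‖ξ‖}, K * (w₁ ξ + w₀ ξ) * (1+t)^(-l-3) := by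
    apply integral_mono_of_nonneg
    · filter_upwards with ξ
      positivity
    · exact hgint.restrict
    · rw [Filter.EventuallyLE, ae_restrict_iff' hsmeas]
      filter_upwards with ξ hξ
      have := hpt v₀ v₁ t ht ξ hξ
      calc ‖uhatC ζ v₀ v₁ t ξ - waveC v₀ v₁ t ξ‖ ^ 2
          ≤ K * ((1 + ‖ξ‖ ^ 2) ^ l * ‖v₁ ξ‖ ^ 2 + (1 + ‖ξ‖ ^ 2) ^ (l + 1) * ‖v₀ ξ‖ ^ 2) *
            (1 + t) ^ (-l - 3) := this
        _ = K * (w₁ ξ + w₀ ξ) * (1+t)^(-l-3) := by rw [hw₁, hw₀]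
  have step2 : (∫ ξ in {ξ : Rn n | 1 ≤ ‖ξ‖}, K * (w₁ ξ + w₀ ξ) * (1+t)^(-l-3)) ≤
      ∫ ξ : Rn n, K * (w₁ ξ + w₀ ξ) * (1+t)^(-l-3) := by
    apply setIntegral_le_integral hgint
    filter_upwards with ξ
    have h1 : 0 ≤ w₁ ξ := by rw [hw₁]; positivity
    have h0 : 0 ≤ w₀ ξ := by rw [hw₀]; positivity
    positivity
  have hw₁0 : 0 ≤ ∫ ξ : Rn n, w₁ ξ := integral_nonneg (fun ξ => by rw [hw₁]; positivity)
  have hw₀0 : 0 ≤ ∫ ξ : Rn n, w₀ ξ := integral_nonneg (fun ξ => by rw [hw₀]; positivity)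
  have step3 : (∫ ξ : Rn n, K * (w₁ ξ + w₀ ξ) * (1+t)^(-l-3)) =
      K * ((∫ ξ : Rn n, w₁ ξ) + ∫ ξ : Rn n, w₀ ξ) * (1+t)^(-l-3) := by
    rw [integral_mul_const, integral_const_mul, integral_add hi₁ hi₀]
  have hn₁ : HNormC l v₁ ^ 2 = ∫ ξ : Rn n, w₁ ξ := by
    rw [HNormC, ← Real.rpow_natCast ((∫ ξ : Rn n, w₁ ξ) ^ ((1:ℝ)/2)) 2,
      ← Real.rpow_mul hw₁0]
    norm_num
  have hn₀ : HNormC (l+1) v₀ ^ 2 = ∫ ξ : Rn n, w₀ ξ := by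
    rw [HNormC, ← Real.rpow_natCast ((∫ ξ : Rn n, w₀ ξ) ^ ((1:ℝ)/2)) 2,
      ← Real.rpow_mul hw₀0]
    norm_num
  calc (∫ ξ in {ξ : Rn n | 1 ≤ ‖ξ‖}, ‖uhatC ζ v₀ v₁ t ξ - waveC v₀ v₁ t ξ‖ ^ 2)
      ≤ ∫ ξ in {ξ : Rn n | 1 ≤ ‖ξ‖}, K * (w₁ ξ + w₀ ξ) * (1+t)^(-l-3) := step1
    _ ≤ ∫ ξ : Rn n, K * (w₁ ξ + w₀ ξ) * (1+t)^(-l-3) := step2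
    _ = K * ((∫ ξ : Rn n, w₁ ξ) + ∫ ξ : Rn n, w₀ ξ) * (1+t)^(-l-3) := step3
    _ = K * (HNormC l v₁ ^ 2 + HNormC (l + 1) v₀ ^ 2) * (1 + t) ^ (-l - 3) := by
        rw [hn₁, hn₀]
end
end

section
/- Let n ≥ 1 be an integer, let ζ ∈ (0,1) be the unique positive real with 4ζ²(1+ζ²)² = 1, and let δ ∈ (0,ζ). Suppose u₀, u₁ ∈ L²(ℝⁿ). Then there exist constants C > 0 and η > 0, independent of t, u₀ and u₁, such that for all t ≥ 0, ∫_{δ < |ξ| < 1} |û(t,ξ)|² dξ ≤ C·( ‖u₀‖²_{L²} + ‖u₁‖²_{L²} )·e^{−ηt}. -/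
open MeasureTheory Real Set

noncomputable section

open DampedPlate


lemma my_sinh_le_mul_exp {x : ℝ} (hx : 0 ≤ x) : Real.sinh x ≤ x * Real.exp x := by
  rw [Real.sinh_eq]
  have h2 : Real.exp (-x) = Real.exp x * Real.exp (-(2*x)) := by
    rw [← Real.exp_add]; ring_nf
  nlinarith [Real.exp_pos x, Real.add_one_le_exp (-(2*x))]

lemma my_cosh_le_exp {x : ℝ} (hx : 0 ≤ x) : Real.cosh x ≤ Real.exp x := by
  rw [Real.cosh_eq]
  have : Real.exp (-x) ≤ Real.exp x := Real.exp_le_exp.mpr (by linarith)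
  linarith

set_option maxHeartbeats 1000000 in
lemma E_bounds {n : ℕ} (ζ δ : ℝ) (hζ : zetaCond ζ) (hδ : 0 < δ) (hδζ : δ < ζ)
    (t : ℝ) (ht : 0 ≤ t) (ξ : Rn n) (hξ1 : δ < ‖ξ‖) (hξ2 : ‖ξ‖ < 1) :
    |E0 ζ t ξ| ≤ Real.exp (-(δ^2/2) * t) ∧ |E1 ζ t ξ| ≤ t * Real.exp (-(δ^2/2) * t) := by
  obtain ⟨hζ0, hζ1, hζeq⟩ := hζ
  set r := ‖ξ‖ with hrdef
  have hr0 : 0 < r := hδ.trans hξ1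
  have hζ2 : 4*ζ^2 < 1 := by
    nlinarith [mul_pos (mul_pos (show (0:ℝ)<4 by norm_num) (pow_pos hζ0 2))
      (show (0:ℝ) < 2*ζ^2+ζ^4 by positivity)]
  have hδ2 : δ^2 < 1/4 := by
    nlinarith [mul_pos (sub_pos.mpr hδζ) (show (0:ℝ) < ζ + δ by linarith), sq_nonneg (2*ζ-1)]
  have hA1 : (1:ℝ) ≤ 1 + r^2 := by nlinarith
  have hA2 : 1 + r^2 < 2 := by nlinarith
  have hApos : (0:ℝ) < 2*(1+r^2) := by nlinarith
  have hdec : -t / (2*(1+r^2)) ≤ -(δ^2/2) * t := by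
    have h : δ^2/2 * t ≤ t / (2*(1+r^2)) := by
      rw [le_div_iff₀ hApos]
      nlinarith [mul_le_mul_of_nonneg_left (show δ^2*(1+r^2) ≤ (1:ℝ) by nlinarith) ht]
    rw [neg_div, neg_mul]
    linarith
  by_cases hcase : ζ < r
  · -- oscillatory regime
    rw [E0, E1, if_pos hcase, if_pos hcase]
    constructor
    · rw [abs_mul, Real.abs_exp]
      calc Real.exp (-t/(2*(1+r^2))) * |Real.cos _| ≤ Real.exp (-t/(2*(1+r^2))) * 1 :=
            mul_le_mul_of_nonneg_left (Real.abs_cos_le_one _) (Real.exp_nonneg _)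
        _ = Real.exp (-t/(2*(1+r^2))) := mul_one _
        _ ≤ Real.exp (-(δ^2/2)*t) := Real.exp_le_exp.mpr hdec
    · rw [abs_mul, Real.abs_exp]
      set s := Real.sqrt (4*r^2*(1+r^2)^2 - 1) with hs
      have hs0 : 0 ≤ s := Real.sqrt_nonneg _
      have hsin : |Real.sin (t * s / (2*(1+r^2))) / (s / (2*(1+r^2)))| ≤ t := by
        rcases eq_or_lt_of_le hs0 with h0 | hpos
        · rw [← h0]
          simp [ht]
        · have hb : 0 < s / (2*(1+r^2)) := div_pos hpos hApos
          rw [abs_div, abs_of_pos hb, div_le_iff₀ hb]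
          calc |Real.sin (t * s / (2*(1+r^2)))| ≤ |t * s / (2*(1+r^2))| :=
                Real.abs_sin_le_abs
            _ = t * (s / (2*(1+r^2))) := by
                rw [abs_of_nonneg (by positivity)]; ring
      calc Real.exp (-t/(2*(1+r^2))) * |Real.sin (t * s / (2*(1+r^2))) / (s / (2*(1+r^2)))|
            ≤ Real.exp (-t/(2*(1+r^2))) * t :=
            mul_le_mul_of_nonneg_left hsin (Real.exp_nonneg _)
        _ = t * Real.exp (-t/(2*(1+r^2))) := mul_comm _ _
        _ ≤ t * Real.exp (-(δ^2/2)*t) :=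
            mul_le_mul_of_nonneg_left (Real.exp_le_exp.mpr hdec) ht
  · -- exponential (cosh/sinh) regime: δ < r ≤ ζ
    have hrζ : r ≤ ζ := not_lt.mp hcase
    rw [E0, E1, if_neg hcase, if_neg hcase]
    have hs_nonneg : 0 ≤ 1 - 4*r^2*(1+r^2)^2 := by
      have hr2 : r^2 ≤ ζ^2 := by nlinarith
      have h2 : (1+r^2)^2 ≤ (1+ζ^2)^2 := by nlinarith
      nlinarith [mul_le_mul hr2 h2 (by positivity : (0:ℝ) ≤ (1+r^2)^2) (by positivity : (0:ℝ) ≤ ζ^2)]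
    set μ := Real.sqrt (1 - 4*r^2*(1+r^2)^2) with hμdef
    have hμ0 : 0 ≤ μ := Real.sqrt_nonneg _
    have hμle : μ ≤ 1 - 2*δ^2 := by
      have ha : δ^2 ≤ r^2 := by nlinarith
      have hb : 4*r^2 ≤ 4*r^2*(1+r^2)^2 := by
        have h1' : (1:ℝ) ≤ (1+r^2)^2 := by nlinarith
        nlinarith
      have h1 : 1 - 4*r^2*(1+r^2)^2 ≤ (1 - 2*δ^2)^2 := by
        have := sq_nonneg (δ^2)
        nlinarith
      calc μ ≤ Real.sqrt ((1-2*δ^2)^2) := Real.sqrt_le_sqrt h1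
        _ = 1 - 2*δ^2 := Real.sqrt_sq (by nlinarith)
    have hxnn : 0 ≤ t * μ / (2*(1+r^2)) := by positivity
    have hsum : -t/(2*(1+r^2)) + t * μ / (2*(1+r^2)) ≤ -(δ^2/2)*t := by
      have hcoef : δ^2*(1+r^2) ≤ 1 - μ := by
        nlinarith [mul_nonneg (sq_nonneg δ) (show (0:ℝ) ≤ 2 - (1+r^2) by linarith)]
      have h : δ^2/2*t ≤ (t - t*μ)/(2*(1+r^2)) := by
        rw [le_div_iff₀ hApos]
        nlinarith [mul_le_mul_of_nonneg_left hcoef ht]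
      have heq : (-t + t*μ)/(2*(1+r^2)) = -((t - t*μ)/(2*(1+r^2))) := by ring
      rw [← add_div, heq, neg_mul]
      linarith
    constructor
    · rw [abs_of_nonneg (by positivity)]
      calc Real.exp (-t/(2*(1+r^2))) * Real.cosh (t*μ/(2*(1+r^2)))
          ≤ Real.exp (-t/(2*(1+r^2))) * Real.exp (t*μ/(2*(1+r^2))) :=
            mul_le_mul_of_nonneg_left (my_cosh_le_exp hxnn) (Real.exp_nonneg _)
        _ = Real.exp (-t/(2*(1+r^2)) + t*μ/(2*(1+r^2))) := (Real.exp_add _ _).symm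
        _ ≤ Real.exp (-(δ^2/2)*t) := Real.exp_le_exp.mpr hsum
    · rcases eq_or_lt_of_le hμ0 with h0 | hpos
      · rw [← h0]
        simp [mul_nonneg ht (Real.exp_nonneg _)]
      · have hb : 0 < μ / (2*(1+r^2)) := div_pos hpos hApos
        have hdivle : Real.sinh (t*μ/(2*(1+r^2))) / (μ/(2*(1+r^2)))
            ≤ t * Real.exp (t*μ/(2*(1+r^2))) := by
          rw [div_le_iff₀ hb]
          calc Real.sinh (t*μ/(2*(1+r^2)))
              ≤ (t*μ/(2*(1+r^2))) * Real.exp (t*μ/(2*(1+r^2))) := my_sinh_le_mul_exp hxnn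
            _ = t * Real.exp (t*μ/(2*(1+r^2))) * (μ/(2*(1+r^2))) := by ring
        have hnn : 0 ≤ Real.sinh (t*μ/(2*(1+r^2))) / (μ/(2*(1+r^2))) :=
          div_nonneg (by simpa using Real.sinh_nonneg_iff.mpr hxnn) hb.le
        rw [abs_of_nonneg (mul_nonneg (Real.exp_nonneg _) hnn)]
        calc Real.exp (-t/(2*(1+r^2))) * (Real.sinh (t*μ/(2*(1+r^2))) / (μ/(2*(1+r^2))))
            ≤ Real.exp (-t/(2*(1+r^2))) * (t * Real.exp (t*μ/(2*(1+r^2)))) :=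
              mul_le_mul_of_nonneg_left hdivle (Real.exp_nonneg _)
          _ = t * Real.exp (-t/(2*(1+r^2)) + t*μ/(2*(1+r^2))) := by
              rw [Real.exp_add]; ring
          _ ≤ t * Real.exp (-(δ^2/2)*t) :=
              mul_le_mul_of_nonneg_left (Real.exp_le_exp.mpr hsum) ht

set_option maxHeartbeats 1000000 in
/-- **Lemma 4.3** (middle-frequency estimate). Stated on the Fourier side: `v₀ = û₀`, `v₁ = û₁`
are the Fourier transforms of the `L²` data. -/
theorem stmt_5 (n : ℕ) (hn : 1 ≤ n) (ζ δ : ℝ) (hζ : zetaCond ζ)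
    (hδ : 0 < δ) (hδζ : δ < ζ) :
    ∃ C > (0 : ℝ), ∃ η > (0 : ℝ), ∀ v₀ v₁ : Rn n → ℂ,
      MemLp v₀ 2 (volume : Measure (Rn n)) → MemLp v₁ 2 (volume : Measure (Rn n)) →
      ∀ t : ℝ, 0 ≤ t →
        (∫ ξ in {ξ : Rn n | δ < ‖ξ‖ ∧ ‖ξ‖ < 1}, ‖uhatC ζ v₀ v₁ t ξ‖ ^ 2) ≤
          C * ((∫ ξ : Rn n, ‖v₀ ξ‖ ^ 2) + ∫ ξ : Rn n, ‖v₁ ξ‖ ^ 2) * Real.exp (-η * t) := by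
  classical
  refine ⟨2*(1+4/δ^2)^2, by positivity, δ^2/4, by positivity, ?_⟩
  intro v₀ v₁ hv₀ hv₁ t ht
  have hv0sq : Integrable (fun ξ : Rn n => ‖v₀ ξ‖^2) :=
    (memLp_two_iff_integrable_sq_norm hv₀.aestronglyMeasurable).mp hv₀
  have hv1sq : Integrable (fun ξ : Rn n => ‖v₁ ξ‖^2) :=
    (memLp_two_iff_integrable_sq_norm hv₁.aestronglyMeasurable).mp hv₁
  have hS : MeasurableSet {ξ : Rn n | δ < ‖ξ‖ ∧ ‖ξ‖ < 1} :=
    (measurableSet_lt measurable_const measurable_norm).inter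
      (measurableSet_lt measurable_norm measurable_const)
  have key : ∀ ξ ∈ {ξ : Rn n | δ < ‖ξ‖ ∧ ‖ξ‖ < 1},
      ‖uhatC ζ v₀ v₁ t ξ‖^2 ≤
        2*(1+4/δ^2)^2 * Real.exp (-(δ^2/4)*t) * (‖v₀ ξ‖^2 + ‖v₁ ξ‖^2) := by
    rintro ξ ⟨h1, h2⟩
    obtain ⟨hb0, hb1⟩ := E_bounds ζ δ hζ hδ hδζ t ht ξ h1 h2
    set K := 4/δ^2 with hK
    set e1 := Real.exp (-(δ^2/4)*t) with he1
    set e2 := Real.exp (-(δ^2/2)*t) with he2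
    have he1pos : 0 < e1 := Real.exp_pos _
    have he1le : e1 ≤ 1 := Real.exp_le_one_iff.mpr (by nlinarith)
    have he2e1 : e2 ≤ e1 := Real.exp_le_exp.mpr (by nlinarith)
    have hK0 : 0 < K := by positivity
    have htK : t * e2 ≤ K * e1 := by
      have hid : e2 = e1 * e1 := by rw [he1, he2, ← Real.exp_add]; ring_nf
      have hexp : e1 * Real.exp ((δ^2/4)*t) = 1 := by
        rw [he1, ← Real.exp_add]
        simp
      have h3 : (δ^2/4)*t + 1 ≤ Real.exp ((δ^2/4)*t) := Real.add_one_le_exp _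
      have h4 : t * e1 ≤ K := by
        have h5 : t ≤ K * Real.exp ((δ^2/4)*t) := by
          rw [hK, div_mul_eq_mul_div, le_div_iff₀ (by positivity : (0:ℝ) < δ^2)]
          nlinarith
        calc t * e1 ≤ (K * Real.exp ((δ^2/4)*t)) * e1 :=
              mul_le_mul_of_nonneg_right h5 he1pos.le
          _ = K * (e1 * Real.exp ((δ^2/4)*t)) := by ring
          _ = K := by rw [hexp, mul_one]
      calc t * e2 = (t * e1) * e1 := by rw [hid]; ring
        _ ≤ K * e1 := mul_le_mul_of_nonneg_right h4 he1pos.le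
    have hc : |(1:ℝ)/(2*(1+‖ξ‖^2))| ≤ 1 := by
      rw [abs_of_pos (by positivity), div_le_one (by positivity)]
      nlinarith [sq_nonneg ‖ξ‖]
    have hnorm : ‖uhatC ζ v₀ v₁ t ξ‖ ≤
        ‖v₀ ξ‖ * |E0 ζ t ξ| + (‖v₁ ξ‖ + ‖v₀ ξ‖ * |(1:ℝ)/(2*(1+‖ξ‖^2))|) * |E1 ζ t ξ| := by
      rw [uhatC]
      refine (norm_add_le _ _).trans ?_
      rw [norm_mul, norm_mul, Complex.norm_real, Complex.norm_real,
        Real.norm_eq_abs, Real.norm_eq_abs]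
      gcongr
      refine (norm_add_le _ _).trans ?_
      rw [norm_mul, Complex.norm_real, Real.norm_eq_abs]
    have hbound : ‖uhatC ζ v₀ v₁ t ξ‖ ≤ (1+K) * (‖v₀ ξ‖ + ‖v₁ ξ‖) * e1 := by
      have t1 : ‖v₀ ξ‖ * |E0 ζ t ξ| ≤ ‖v₀ ξ‖ * e1 :=
        mul_le_mul_of_nonneg_left (hb0.trans he2e1) (norm_nonneg _)
      have t2 : (‖v₁ ξ‖ + ‖v₀ ξ‖ * |(1:ℝ)/(2*(1+‖ξ‖^2))|) * |E1 ζ t ξ| ≤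
          (‖v₁ ξ‖ + ‖v₀ ξ‖) * (K * e1) := by
        refine mul_le_mul ?_ (hb1.trans htK) (abs_nonneg _) (by positivity)
        have := mul_le_mul_of_nonneg_left hc (norm_nonneg (v₀ ξ))
        linarith
      refine hnorm.trans ?_
      nlinarith [mul_nonneg (mul_nonneg hK0.le he1pos.le) (norm_nonneg (v₁ ξ)),
        mul_nonneg (mul_nonneg hK0.le he1pos.le) (norm_nonneg (v₀ ξ))]
    have s1 : (‖v₀ ξ‖ + ‖v₁ ξ‖)^2 ≤ 2*(‖v₀ ξ‖^2 + ‖v₁ ξ‖^2) := by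
      nlinarith [sq_nonneg (‖v₀ ξ‖ - ‖v₁ ξ‖)]
    have s2 : e1^2 ≤ e1 := by nlinarith
    have s3 : (‖v₀ ξ‖ + ‖v₁ ξ‖)^2 * e1^2 ≤ (2*(‖v₀ ξ‖^2 + ‖v₁ ξ‖^2)) * e1 :=
      mul_le_mul s1 s2 (sq_nonneg _) (by positivity)
    calc ‖uhatC ζ v₀ v₁ t ξ‖^2 ≤ ((1+K) * (‖v₀ ξ‖ + ‖v₁ ξ‖) * e1)^2 :=
          pow_le_pow_left₀ (norm_nonneg _) hbound 2
      _ = (1+K)^2 * ((‖v₀ ξ‖ + ‖v₁ ξ‖)^2 * e1^2) := by ring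
      _ ≤ (1+K)^2 * ((2*(‖v₀ ξ‖^2 + ‖v₁ ξ‖^2)) * e1) :=
          mul_le_mul_of_nonneg_left s3 (by positivity)
      _ = 2*(1+K)^2 * e1 * (‖v₀ ξ‖^2 + ‖v₁ ξ‖^2) := by ring
  have hgint : Integrable (fun ξ : Rn n =>
      2*(1+4/δ^2)^2 * Real.exp (-(δ^2/4)*t) * (‖v₀ ξ‖^2 + ‖v₁ ξ‖^2)) :=
    (hv0sq.add hv1sq).const_mul _
  have step1 : (∫ ξ in {ξ : Rn n | δ < ‖ξ‖ ∧ ‖ξ‖ < 1}, ‖uhatC ζ v₀ v₁ t ξ‖^2) ≤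
      ∫ ξ in {ξ : Rn n | δ < ‖ξ‖ ∧ ‖ξ‖ < 1},
        2*(1+4/δ^2)^2 * Real.exp (-(δ^2/4)*t) * (‖v₀ ξ‖^2 + ‖v₁ ξ‖^2) := by
    apply integral_mono_of_nonneg
    · exact Filter.Eventually.of_forall fun ξ => by positivity
    · exact hgint.integrableOn
    · exact (ae_restrict_iff' hS).2 (Filter.Eventually.of_forall key)
  have step2 : (∫ ξ in {ξ : Rn n | δ < ‖ξ‖ ∧ ‖ξ‖ < 1},
        2*(1+4/δ^2)^2 * Real.exp (-(δ^2/4)*t) * (‖v₀ ξ‖^2 + ‖v₁ ξ‖^2)) =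
      2*(1+4/δ^2)^2 * Real.exp (-(δ^2/4)*t) *
        ∫ ξ in {ξ : Rn n | δ < ‖ξ‖ ∧ ‖ξ‖ < 1}, (‖v₀ ξ‖^2 + ‖v₁ ξ‖^2) :=
    integral_const_mul _ _
  have step3 : (∫ ξ in {ξ : Rn n | δ < ‖ξ‖ ∧ ‖ξ‖ < 1}, (‖v₀ ξ‖^2 + ‖v₁ ξ‖^2)) ≤
      ∫ ξ : Rn n, (‖v₀ ξ‖^2 + ‖v₁ ξ‖^2) :=
    setIntegral_le_integral (hv0sq.add hv1sq)
      (Filter.Eventually.of_forall fun ξ => by positivity)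
  have step4 : (∫ ξ : Rn n, (‖v₀ ξ‖^2 + ‖v₁ ξ‖^2)) =
      (∫ ξ : Rn n, ‖v₀ ξ‖^2) + ∫ ξ : Rn n, ‖v₁ ξ‖^2 := integral_add hv0sq hv1sq
  calc (∫ ξ in {ξ : Rn n | δ < ‖ξ‖ ∧ ‖ξ‖ < 1}, ‖uhatC ζ v₀ v₁ t ξ‖^2) ≤
        ∫ ξ in {ξ : Rn n | δ < ‖ξ‖ ∧ ‖ξ‖ < 1},
          2*(1+4/δ^2)^2 * Real.exp (-(δ^2/4)*t) * (‖v₀ ξ‖^2 + ‖v₁ ξ‖^2) := step1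
    _ = 2*(1+4/δ^2)^2 * Real.exp (-(δ^2/4)*t) *
          ∫ ξ in {ξ : Rn n | δ < ‖ξ‖ ∧ ‖ξ‖ < 1}, (‖v₀ ξ‖^2 + ‖v₁ ξ‖^2) := step2
    _ ≤ 2*(1+4/δ^2)^2 * Real.exp (-(δ^2/4)*t) *
          ((∫ ξ : Rn n, ‖v₀ ξ‖^2) + ∫ ξ : Rn n, ‖v₁ ξ‖^2) :=
        mul_le_mul_of_nonneg_left (step3.trans_eq step4) (by positivity)
    _ = 2*(1+4/δ^2)^2 * ((∫ ξ : Rn n, ‖v₀ ξ‖^2) + ∫ ξ : Rn n, ‖v₁ ξ‖^2) *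
          Real.exp (-(δ^2/4)*t) := by ring
end
end

section
/- Let n ≥ 1 and suppose u₀, u₁ ∈ L²(ℝⁿ). Then there exist constants C > 0 and η ∈ (0,1), independent of t, u₀ and u₁, such that for all t ≥ 0, ∫_{|ξ| ≤ 1} | û₁(ξ)·e^{−t/(2|ξ|²)}·sin(t|ξ|)/|ξ| + û₀(ξ)·e^{−t/(2|ξ|²)}·cos(t|ξ|) |² dξ ≤ C·( ‖u₁‖²_{L²} + ‖u₀‖²_{L²} )·e^{−ηt}. -/
open MeasureTheory Real Set

noncomputable section

open DampedPlate

lemma coef_bounds (t r : ℝ) (ht : 0 ≤ t) (hr : 0 < r) (hr1 : r ≤ 1) :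
    |Real.exp (-t / (2 * r ^ 2)) * (Real.sin (t * r) / r)| ≤ 4 * Real.exp (-t / 4) ∧
    |Real.exp (-t / (2 * r ^ 2)) * Real.cos (t * r)| ≤ 4 * Real.exp (-t / 4) := by
  have hE : Real.exp (-t / (2 * r ^ 2)) ≤ Real.exp (-t / 2) := by
    apply Real.exp_le_exp.2
    rw [neg_div, neg_div, neg_le_neg_iff]
    apply div_le_div_of_nonneg_left ht (by positivity)
    nlinarith
  have hhalf : Real.exp (-t / 2) ≤ Real.exp (-t / 4) := by
    apply Real.exp_le_exp.2; nlinarith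
  have h4 : t * Real.exp (-t / 2) ≤ 4 * Real.exp (-t / 4) := by
    have h1 : t ≤ 4 * Real.exp (t / 4) := by nlinarith [Real.add_one_le_exp (t / 4)]
    have h2 : (4 : ℝ) * Real.exp (t / 4) * Real.exp (-t / 2) = 4 * Real.exp (-t / 4) := by
      rw [mul_assoc, ← Real.exp_add]; ring_nf
    calc t * Real.exp (-t / 2) ≤ 4 * Real.exp (t / 4) * Real.exp (-t / 2) := by
          apply mul_le_mul_of_nonneg_right h1 (Real.exp_pos _).le
      _ = _ := h2
  constructor
  · have hs : |Real.sin (t * r) / r| ≤ t := by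
      rw [abs_div, abs_of_pos hr, div_le_iff₀ hr]
      calc |Real.sin (t * r)| ≤ |t * r| := Real.abs_sin_le_abs
        _ = t * r := abs_of_nonneg (by positivity)
    rw [abs_mul, abs_of_pos (Real.exp_pos _)]
    calc Real.exp (-t / (2 * r ^ 2)) * |Real.sin (t * r) / r|
        ≤ Real.exp (-t / 2) * t := by
          apply mul_le_mul hE hs (abs_nonneg _) (Real.exp_pos _).le
      _ = t * Real.exp (-t / 2) := by ring
      _ ≤ _ := h4
  · rw [abs_mul, abs_of_pos (Real.exp_pos _)]
    calc Real.exp (-t / (2 * r ^ 2)) * |Real.cos (t * r)|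
        ≤ Real.exp (-t / 2) * 1 :=
          mul_le_mul hE (Real.abs_cos_le_one _) (abs_nonneg _) (Real.exp_pos _).le
      _ = Real.exp (-t / 2) := mul_one _
      _ ≤ Real.exp (-t / 4) := hhalf
      _ ≤ 4 * Real.exp (-t / 4) := by nlinarith [Real.exp_pos (-t/4)]

lemma wave_pointwise {n : ℕ} (v₀ v₁ : Rn n → ℂ) (t : ℝ) (ht : 0 ≤ t) (ξ : Rn n)
    (hξ : ‖ξ‖ ≤ 1) (h0 : ξ ≠ 0) :
    ‖waveC v₀ v₁ t ξ‖ ^ 2 ≤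
      32 * Real.exp (-(1 / 2) * t) * (‖v₁ ξ‖ ^ 2 + ‖v₀ ξ‖ ^ 2) := by
  have hr : 0 < ‖ξ‖ := norm_pos_iff.2 h0
  obtain ⟨hc₁, hc₂⟩ := coef_bounds t ‖ξ‖ ht hr hξ
  set E := Real.exp (-t / 4) with hEdef
  have hE0 : 0 ≤ E := (Real.exp_pos _).le
  have hnorm : ‖waveC v₀ v₁ t ξ‖ ≤ 4 * E * (‖v₁ ξ‖ + ‖v₀ ξ‖) := by
    calc ‖waveC v₀ v₁ t ξ‖ ≤
        ‖v₁ ξ‖ * |Real.exp (-t / (2 * ‖ξ‖ ^ 2)) * (Real.sin (t * ‖ξ‖) / ‖ξ‖)| +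
        ‖v₀ ξ‖ * |Real.exp (-t / (2 * ‖ξ‖ ^ 2)) * Real.cos (t * ‖ξ‖)| := by
          rw [waveC]
          refine (norm_add_le _ _).trans (le_of_eq ?_)
          simp only [norm_mul, Complex.norm_real, Real.norm_eq_abs, abs_mul]
      _ ≤ ‖v₁ ξ‖ * (4 * E) + ‖v₀ ξ‖ * (4 * E) := by
          gcongr
      _ = 4 * E * (‖v₁ ξ‖ + ‖v₀ ξ‖) := by ring
  have hsq : ‖waveC v₀ v₁ t ξ‖ ^ 2 ≤ (4 * E * (‖v₁ ξ‖ + ‖v₀ ξ‖)) ^ 2 := by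
    apply pow_le_pow_left₀ (norm_nonneg _) hnorm
  have hE2 : E ^ 2 = Real.exp (-(1 / 2) * t) := by
    rw [hEdef, ← Real.exp_nat_mul]
    ring_nf
  nlinarith [sq_nonneg (‖v₁ ξ‖ - ‖v₀ ξ‖), sq_nonneg E, norm_nonneg (v₁ ξ), norm_nonneg (v₀ ξ)]


/-- Estimate (4.1): the wave-like profile is exponentially small in the region `|ξ| ≤ 1`.
Stated on the Fourier side: `v₀ = û₀`, `v₁ = û₁` are the Fourier transforms of the `L²` data. -/
theorem stmt_10 (n : ℕ) (hn : 1 ≤ n) :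
    ∃ C > (0 : ℝ), ∃ η : ℝ, 0 < η ∧ η < 1 ∧ ∀ v₀ v₁ : Rn n → ℂ,
      MemLp v₀ 2 (volume : Measure (Rn n)) → MemLp v₁ 2 (volume : Measure (Rn n)) →
      ∀ t : ℝ, 0 ≤ t →
        (∫ ξ in {ξ : Rn n | ‖ξ‖ ≤ 1}, ‖waveC v₀ v₁ t ξ‖ ^ 2) ≤
          C * ((∫ ξ : Rn n, ‖v₁ ξ‖ ^ 2) + ∫ ξ : Rn n, ‖v₀ ξ‖ ^ 2) * Real.exp (-η * t) := by
  refine ⟨32, by norm_num, 1 / 2, by norm_num, by norm_num, ?_⟩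
  intro v₀ v₁ h₀ h₁ t ht
  haveI : Nonempty (Fin n) := ⟨⟨0, hn⟩⟩
  have hi₀ : Integrable (fun ξ : Rn n => ‖v₀ ξ‖ ^ 2) := by
    simpa [ENNReal.toReal_ofNat, Real.rpow_natCast] using
      h₀.integrable_norm_rpow (by norm_num) (by norm_num)
  have hi₁ : Integrable (fun ξ : Rn n => ‖v₁ ξ‖ ^ 2) := by
    simpa [ENNReal.toReal_ofNat, Real.rpow_natCast] using
      h₁.integrable_norm_rpow (by norm_num) (by norm_num)
  set S : Set (Rn n) := {ξ | ‖ξ‖ ≤ 1} with hSdef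
  have hSmeas : MeasurableSet S := (isClosed_le continuous_norm continuous_const).measurableSet
  have hg : Integrable (fun ξ : Rn n =>
      32 * Real.exp (-(1 / 2) * t) * (‖v₁ ξ‖ ^ 2 + ‖v₀ ξ‖ ^ 2)) := (hi₁.add hi₀).const_mul _
  have hexp : Measurable fun ξ : Rn n => Real.exp (-t / (2 * ‖ξ‖ ^ 2)) :=
    Real.measurable_exp.comp (measurable_const.div ((measurable_norm.pow_const 2).const_mul 2))
  have m1 : Measurable (fun ξ : Rn n =>
      ((Real.exp (-t / (2 * ‖ξ‖ ^ 2)) * (Real.sin (t * ‖ξ‖) / ‖ξ‖) : ℝ) : ℂ)) :=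
    Complex.measurable_ofReal.comp
      (hexp.mul ((Real.measurable_sin.comp (measurable_norm.const_mul t)).div measurable_norm))
  have m2 : Measurable (fun ξ : Rn n =>
      ((Real.exp (-t / (2 * ‖ξ‖ ^ 2)) * Real.cos (t * ‖ξ‖) : ℝ) : ℂ)) :=
    Complex.measurable_ofReal.comp
      (hexp.mul (Real.measurable_cos.comp (measurable_norm.const_mul t)))
  have hwm : AEStronglyMeasurable (fun ξ : Rn n => waveC v₀ v₁ t ξ) volume := by
    exact (h₁.aestronglyMeasurable.mul m1.aestronglyMeasurable).add
      (h₀.aestronglyMeasurable.mul m2.aestronglyMeasurable)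
  have hm : AEStronglyMeasurable (fun ξ : Rn n => ‖waveC v₀ v₁ t ξ‖ ^ 2) volume :=
    (hwm.norm.aemeasurable.pow_const 2).aestronglyMeasurable
  have hz : (volume.restrict S) {(0 : Rn n)} = 0 := by
    rw [Measure.restrict_apply (measurableSet_singleton 0)]
    exact measure_mono_null Set.inter_subset_left (measure_singleton 0)
  have hae0 : ∀ᵐ ξ ∂(volume.restrict S), ξ ≠ 0 := by
    have hset : {ξ : Rn n | ¬ ξ ≠ 0} = {0} := by ext; simp
    rw [ae_iff, hset]; exact hz
  have hbound : ∀ᵐ ξ ∂(volume.restrict S), ‖waveC v₀ v₁ t ξ‖ ^ 2 ≤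
      32 * Real.exp (-(1 / 2) * t) * (‖v₁ ξ‖ ^ 2 + ‖v₀ ξ‖ ^ 2) := by
    filter_upwards [hae0, ae_restrict_mem hSmeas] with ξ h0 hS'
    exact wave_pointwise v₀ v₁ t ht ξ hS' h0
  have hwint : IntegrableOn (fun ξ : Rn n => ‖waveC v₀ v₁ t ξ‖ ^ 2) S := by
    refine Integrable.mono' hg.integrableOn hm.restrict ?_
    filter_upwards [hbound] with ξ h
    simpa [Real.norm_eq_abs, abs_of_nonneg (by positivity : (0:ℝ) ≤ ‖waveC v₀ v₁ t ξ‖ ^ 2)]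
      using h
  calc (∫ ξ in S, ‖waveC v₀ v₁ t ξ‖ ^ 2)
      ≤ ∫ ξ in S, 32 * Real.exp (-(1 / 2) * t) * (‖v₁ ξ‖ ^ 2 + ‖v₀ ξ‖ ^ 2) :=
        integral_mono_ae hwint hg.integrableOn hbound
    _ ≤ ∫ ξ : Rn n, 32 * Real.exp (-(1 / 2) * t) * (‖v₁ ξ‖ ^ 2 + ‖v₀ ξ‖ ^ 2) := by
        apply setIntegral_le_integral hg
        filter_upwards with ξ; positivity
    _ = 32 * ((∫ ξ : Rn n, ‖v₁ ξ‖ ^ 2) + ∫ ξ : Rn n, ‖v₀ ξ‖ ^ 2) * Real.exp (-(1 / 2) * t) := by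
        rw [MeasureTheory.integral_const_mul, integral_add hi₁ hi₀]; ring
end
end

section
/- Let n ≥ 7 be an integer and l a real number with 2 ≤ l < n/2 − 1. Suppose u₀ ∈ H^{l+1}(ℝⁿ) ∩ L^{1,1}(ℝⁿ) and u₁ ∈ H^{l}(ℝⁿ) ∩ L^{1,1}(ℝⁿ). Then there exists a constant C > 0, depending only on n and l, such that for all t ≥ 1, ( ∫_{ℝⁿ} |û(t,ξ)|² dξ )^{1/2} ≤ C·I₀·t^{−(l+1)/2}. -/
open MeasureTheory Real Set

noncomputable section

open DampedPlate

namespace DampedPlateAux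


lemma sinh_le_mul_exp {x : ℝ} : Real.sinh x ≤ x * Real.exp x := by
  have h1 : 1 - 2*x ≤ Real.exp (-(2*x)) := by linarith [Real.add_one_le_exp (-(2*x))]
  have h2 : Real.exp x * (1 - 2*x) ≤ Real.exp x * Real.exp (-(2*x)) :=
    mul_le_mul_of_nonneg_left h1 (Real.exp_pos x).le
  have h3 : Real.exp x * Real.exp (-(2*x)) = Real.exp (-x) := by
    rw [← Real.exp_add]; ring_nf
  rw [Real.sinh_eq]
  nlinarith [Real.exp_pos x]

lemma cosh_le_exp {x : ℝ} (hx : 0 ≤ x) : Real.cosh x ≤ Real.exp x := by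
  rw [Real.cosh_eq]
  have : Real.exp (-x) ≤ Real.exp x := Real.exp_le_exp.2 (by linarith)
  linarith

lemma sqrt_one_sub_le {h : ℝ} (h0 : 0 ≤ h) (h1 : h ≤ 1) : Real.sqrt (1 - h) ≤ 1 - h / 2 := by
  have : (1 : ℝ) - h ≤ (1 - h/2)^2 := by nlinarith
  calc Real.sqrt (1-h) ≤ Real.sqrt ((1-h/2)^2) := Real.sqrt_le_sqrt this
    _ = 1 - h/2 := Real.sqrt_sq (by linarith)

lemma mul_exp_neg_le {x : ℝ} (_hx : 0 ≤ x) : x * Real.exp (-x) ≤ 1 := by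
  rw [Real.exp_neg, ← div_eq_mul_inv, div_le_one (Real.exp_pos x)]
  linarith [Real.add_one_le_exp x]

lemma exp_div_bound (p : ℝ) (hp : 0 ≤ p) :
    ∃ K : ℝ, 1 ≤ K ∧ ∀ t s : ℝ, 0 < t → 0 < s →
      Real.exp (-(t/s)) ≤ K * t ^ (-p) * s ^ p := by
  classical
  set m : ℕ := ⌈p⌉₊ with hm
  have hK1 : (1:ℝ) ≤ (Nat.factorial m : ℝ) := by
    exact_mod_cast Nat.one_le_iff_ne_zero.mpr (Nat.factorial_ne_zero m)
  refine ⟨(Nat.factorial m : ℝ), hK1, ?_⟩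
  intro t s ht hs
  set u : ℝ := t / s with hu
  have hu0 : 0 < u := div_pos ht hs
  have key : u ^ p ≤ (Nat.factorial m : ℝ) * Real.exp u := by
    rcases le_total u 1 with h | h
    · have h0 : u ^ p ≤ 1 := Real.rpow_le_one hu0.le h hp
      have h2 : (1:ℝ) ≤ Real.exp u := Real.one_le_exp hu0.le
      nlinarith
    · have h1 : u ^ p ≤ u ^ (m : ℝ) :=
        Real.rpow_le_rpow_of_exponent_le h (Nat.le_ceil p)
      have h2 : u ^ (m : ℝ) = u ^ m := Real.rpow_natCast u m
      have h3 : u ^ m / (Nat.factorial m : ℝ) ≤ Real.exp u :=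
        Real.pow_div_factorial_le_exp u hu0.le m
      have h4 : (0:ℝ) < (Nat.factorial m : ℝ) := by exact_mod_cast Nat.factorial_pos m
      rw [div_le_iff₀ h4] at h3
      calc u ^ p ≤ u ^ m := h2 ▸ h1
        _ ≤ (Nat.factorial m : ℝ) * Real.exp u := by linarith
  have hup : (0:ℝ) < u ^ p := Real.rpow_pos_of_pos hu0 p
  have h5 : Real.exp (-(t/s)) ≤ (Nat.factorial m : ℝ) / u ^ p := by
    have he : Real.exp (-(t/s)) = 1 / Real.exp u := by
      rw [Real.exp_neg, inv_eq_one_div]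
    rw [he, div_le_div_iff₀ (Real.exp_pos u) hup]
    linarith
  have h6 : u ^ p = t ^ p / s ^ p := by rw [hu, Real.div_rpow ht.le hs.le]
  have h7 : (Nat.factorial m : ℝ) / u ^ p = (Nat.factorial m : ℝ) * t ^ (-p) * s ^ p := by
    rw [h6, Real.rpow_neg ht.le]
    have hsp : (0:ℝ) < s ^ p := Real.rpow_pos_of_pos hs p
    have htp : (0:ℝ) < t ^ p := Real.rpow_pos_of_pos ht p
    field_simp
  rw [h7] at h5
  exact h5



open DampedPlate Real

variable {n : ℕ}

lemma core_low {ζ t r : ℝ} (hζ : zetaCond ζ) (ht : 0 ≤ t) (hr0 : 0 ≤ r) (hrζ : r ≤ ζ) :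
    Real.exp (-t / (2*(1+r^2))) * Real.exp (t * Real.sqrt (1 - 4*r^2*(1+r^2)^2) / (2*(1+r^2)))
      ≤ Real.exp (-(t*r^2)) := by
  rw [← Real.exp_add]
  apply Real.exp_le_exp.2
  obtain ⟨hζ0, hζ1, hζe⟩ := hζ
  have hs : (0:ℝ) < 1+r^2 := by positivity
  have hh0 : (0:ℝ) ≤ 4*r^2*(1+r^2)^2 := by positivity
  have hh1 : 4*r^2*(1+r^2)^2 ≤ 1 := by
    have hr2 : r^2 ≤ ζ^2 := by nlinarith
    have hq : (1+r^2)^2 ≤ (1+ζ^2)^2 := by nlinarith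
    have hm := mul_le_mul hr2 hq (by positivity) (by positivity)
    nlinarith [hm]
  have hsq : Real.sqrt (1 - 4*r^2*(1+r^2)^2) ≤ 1 - (4*r^2*(1+r^2)^2) / 2 :=
    sqrt_one_sub_le hh0 hh1
  have h2 : t * Real.sqrt (1 - 4*r^2*(1+r^2)^2) ≤ t * (1 - (4*r^2*(1+r^2)^2)/2) :=
    mul_le_mul_of_nonneg_left hsq ht
  rw [← add_div, div_le_iff₀ (by positivity)]
  nlinarith [mul_nonneg (mul_nonneg (mul_nonneg ht (sq_nonneg r)) hs.le) (sq_nonneg r)]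

lemma E0_low {ζ : ℝ} (hζ : zetaCond ζ) {t : ℝ} (ht : 0 ≤ t) {ξ : Rn n} (hr1 : ‖ξ‖ ≤ 1) :
    |E0 ζ t ξ| ≤ Real.exp (-(t/8) * ‖ξ‖^2) := by
  obtain ⟨hζ0, hζ1, hζe⟩ := hζ
  set r := ‖ξ‖ with hrdef
  have hr0 : 0 ≤ r := norm_nonneg ξ
  have hs : (0:ℝ) < 1+r^2 := by positivity
  have hs2 : 1+r^2 ≤ 2 := by nlinarith
  rcases lt_or_ge ζ r with h | h
  · rw [E0, if_pos h]
    rw [abs_mul, abs_of_pos (Real.exp_pos _)]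
    calc Real.exp (-t / (2*(1+r^2))) * |Real.cos (t * Real.sqrt (4*r^2*(1+r^2)^2 - 1) / (2*(1+r^2)))|
        ≤ Real.exp (-t / (2*(1+r^2))) * 1 :=
          mul_le_mul_of_nonneg_left (Real.abs_cos_le_one _) (Real.exp_pos _).le
      _ ≤ Real.exp (-(t/8) * r^2) := by
          rw [mul_one]
          apply Real.exp_le_exp.2
          rw [div_le_iff₀ (by positivity)] at *
          nlinarith [mul_nonneg ht hr0, mul_nonneg ht (sq_nonneg r)]
  · rw [E0, if_neg (not_lt.2 h)]
    have hE0nn : 0 ≤ Real.exp (-t / (2*(1+r^2))) *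
        Real.cosh (t * Real.sqrt (1 - 4*r^2*(1+r^2)^2) / (2*(1+r^2))) :=
      mul_nonneg (Real.exp_pos _).le (Real.cosh_pos _).le
    rw [abs_of_nonneg hE0nn]
    have harg : 0 ≤ t * Real.sqrt (1 - 4*r^2*(1+r^2)^2) / (2*(1+r^2)) := by positivity
    calc Real.exp (-t / (2*(1+r^2))) *
          Real.cosh (t * Real.sqrt (1 - 4*r^2*(1+r^2)^2) / (2*(1+r^2)))
        ≤ Real.exp (-t / (2*(1+r^2))) *
          Real.exp (t * Real.sqrt (1 - 4*r^2*(1+r^2)^2) / (2*(1+r^2))) :=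
          mul_le_mul_of_nonneg_left (cosh_le_exp harg) (Real.exp_pos _).le
      _ ≤ Real.exp (-(t*r^2)) := core_low ⟨hζ0, hζ1, hζe⟩ ht hr0 h
      _ ≤ Real.exp (-(t/8) * r^2) := by
          apply Real.exp_le_exp.2
          nlinarith [mul_nonneg ht (sq_nonneg r)]



set_option maxHeartbeats 1600000 in
lemma E1_low {ζ : ℝ} (hζ : zetaCond ζ) {t : ℝ} (ht : 1 ≤ t) {ξ : Rn n} (hr1 : ‖ξ‖ ≤ 1) :
    |E1 ζ t ξ| ≤ (8/ζ^2) * Real.exp (-(t/8) * ‖ξ‖^2) := by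
  obtain ⟨hζ0, hζ1, hζe⟩ := hζ
  set r := ‖ξ‖ with hrdef
  have hr0 : 0 ≤ r := norm_nonneg ξ
  have ht0 : (0:ℝ) < t := lt_of_lt_of_le one_pos ht
  have hs : (0:ℝ) < 1+r^2 := by positivity
  have hs2 : 1+r^2 ≤ 2 := by nlinarith
  have hζsq : (0:ℝ) < ζ^2 := by positivity
  have hζsq1 : ζ^2 ≤ 1 := by nlinarith
  have hCE8 : (8:ℝ) ≤ 8/ζ^2 := by
    rw [le_div_iff₀ hζsq]; nlinarith
  rcases lt_or_ge ζ r with h | h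
  · rw [E1, if_pos h, ← hrdef, mul_div_assoc]
    set D := Real.sqrt (4*r^2*(1+r^2)^2 - 1) / (2*(1+r^2)) with hD
    have hD0 : 0 ≤ D := by rw [hD]; positivity
    clear_value D
    have hsin : |Real.sin (t*D) / D| ≤ t := by
      rcases eq_or_lt_of_le hD0 with h0 | h0
      · rw [← h0]; simp [ht0.le]
      · rw [abs_div, abs_of_pos h0, div_le_iff₀ h0]
        calc |Real.sin (t*D)| ≤ |t*D| := Real.abs_sin_le_abs
          _ = t*D := abs_of_nonneg (by positivity)
    rw [abs_mul, abs_of_pos (Real.exp_pos _)]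
    have step1 : Real.exp (-t / (2*(1+r^2))) * |Real.sin (t*D) / D| ≤
        Real.exp (-t / (2*(1+r^2))) * t :=
      mul_le_mul_of_nonneg_left hsin (Real.exp_pos _).le
    refine step1.trans ?_
    have e1 : Real.exp (-t / (2*(1+r^2))) ≤ Real.exp (-(t/8)) * Real.exp (-(t/8)) := by
      rw [← Real.exp_add]
      apply Real.exp_le_exp.2
      rw [div_le_iff₀ (by positivity)] at *
      nlinarith
    have e2 : t * Real.exp (-(t/8)) ≤ 8 := by
      have hx := mul_exp_neg_le (x := t/8) (by linarith)
      nlinarith [Real.exp_pos (-(t/8))]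
    have e3 : Real.exp (-(t/8)) ≤ Real.exp (-(t/8) * r^2) := by
      apply Real.exp_le_exp.2
      nlinarith
    calc Real.exp (-t / (2*(1+r^2))) * t ≤ (Real.exp (-(t/8)) * Real.exp (-(t/8))) * t := by
          nlinarith [e1, ht0]
      _ = (t * Real.exp (-(t/8))) * Real.exp (-(t/8)) := by ring
      _ ≤ 8 * Real.exp (-(t/8)) := by
          nlinarith [e2, Real.exp_pos (-(t/8))]
      _ ≤ (8/ζ^2) * Real.exp (-(t/8) * r^2) := by
          apply mul_le_mul hCE8 e3 (Real.exp_pos _).le (by positivity)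
  · rw [E1, if_neg (not_lt.2 h), ← hrdef, mul_div_assoc]
    set a := Real.sqrt (1 - 4*r^2*(1+r^2)^2) / (2*(1+r^2)) with ha
    have ha0 : 0 ≤ a := by rw [ha]; positivity
    clear_value a
    have hsinh0 : 0 ≤ Real.sinh (t*a) := Real.sinh_nonneg_iff.2 (mul_nonneg ht0.le ha0)
    have hE1nn : 0 ≤ Real.exp (-t / (2*(1+r^2))) * (Real.sinh (t*a) / a) :=
      mul_nonneg (Real.exp_pos _).le (div_nonneg hsinh0 ha0)
    rw [abs_of_nonneg hE1nn]
    have hcore : Real.exp (-t / (2*(1+r^2))) * Real.exp (t*a) ≤ Real.exp (-(t*r^2)) := by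
      rw [ha, ← mul_div_assoc]
      exact core_low ⟨hζ0, hζ1, hζe⟩ ht0.le hr0 h
    rcases le_total r (ζ/2) with hsmall | hbig
    · have hh1 : 4*r^2*(1+r^2)^2 ≤ 1/4 := by
        have hr2 : r^2 ≤ ζ^2/4 := by nlinarith
        have hq : (1+r^2)^2 ≤ (1+ζ^2)^2 := by nlinarith
        have hm := mul_le_mul hr2 hq (by positivity) (by positivity)
        nlinarith [hm]
      have hsub : (1:ℝ)/2 ≤ Real.sqrt (1 - 4*r^2*(1+r^2)^2) := by
        have h14 : Real.sqrt (1/4) ≤ Real.sqrt (1 - 4*r^2*(1+r^2)^2) :=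
          Real.sqrt_le_sqrt (by linarith)
        rwa [show (1:ℝ)/4 = (1/2)^2 by norm_num, Real.sqrt_sq (by norm_num)] at h14
      have ha8 : (1:ℝ)/8 ≤ a := by
        rw [ha, le_div_iff₀ (by positivity)]
        nlinarith
      have hsinh : Real.sinh (t*a) / a ≤ 4 * Real.exp (t*a) := by
        have h1 : Real.sinh (t*a) ≤ Real.exp (t*a)/2 := by
          rw [Real.sinh_eq]
          linarith [Real.exp_pos (-(t*a))]
        rw [div_le_iff₀ (by linarith : (0:ℝ) < a)]
        nlinarith [Real.exp_pos (t*a)]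
      calc Real.exp (-t / (2*(1+r^2))) * (Real.sinh (t*a) / a)
          ≤ Real.exp (-t / (2*(1+r^2))) * (4 * Real.exp (t*a)) :=
            mul_le_mul_of_nonneg_left hsinh (Real.exp_pos _).le
        _ = 4 * (Real.exp (-t / (2*(1+r^2))) * Real.exp (t*a)) := by ring
        _ ≤ 4 * Real.exp (-(t*r^2)) := by linarith [hcore]
        _ ≤ (8/ζ^2) * Real.exp (-(t/8) * r^2) := by
            apply mul_le_mul (by linarith) ?_ (Real.exp_pos _).le (by positivity)
            apply Real.exp_le_exp.2
            nlinarith [mul_nonneg ht0.le (sq_nonneg r)]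
    · have hsinh : Real.sinh (t*a) / a ≤ t * Real.exp (t*a) := by
        rcases eq_or_lt_of_le ha0 with h0 | h0
        · rw [← h0, div_zero]
          positivity
        · rw [div_le_iff₀ h0]
          have hle := sinh_le_mul_exp (x := t*a)
          nlinarith
      have step : Real.exp (-t / (2*(1+r^2))) * (Real.sinh (t*a) / a) ≤ t * Real.exp (-(t*r^2)) := by
        calc Real.exp (-t / (2*(1+r^2))) * (Real.sinh (t*a) / a)
            ≤ Real.exp (-t / (2*(1+r^2))) * (t * Real.exp (t*a)) :=
              mul_le_mul_of_nonneg_left hsinh (Real.exp_pos _).le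
          _ = t * (Real.exp (-t / (2*(1+r^2))) * Real.exp (t*a)) := by ring
          _ ≤ t * Real.exp (-(t*r^2)) := mul_le_mul_of_nonneg_left hcore ht0.le
      refine step.trans ?_
      have e1 : Real.exp (-(t*r^2)) = Real.exp (-(7/8*(t*r^2))) * Real.exp (-(t/8) * r^2) := by
        rw [← Real.exp_add]; ring_nf
      have e2 : Real.exp (-(7/8*(t*r^2))) ≤ Real.exp (-(7/32*(t*ζ^2))) := by
        apply Real.exp_le_exp.2
        have hq : ζ^2/4 ≤ r^2 := by nlinarith
        nlinarith [mul_le_mul_of_nonneg_left hq ht0.le]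
      have e3 : t * Real.exp (-(7/32*(t*ζ^2))) ≤ 32/(7*ζ^2) := by
        have hx : (0:ℝ) ≤ 7/32*(t*ζ^2) := by positivity
        have hm := mul_exp_neg_le hx
        rw [le_div_iff₀ (by positivity : (0:ℝ) < 7*ζ^2)]
        nlinarith
      calc t * Real.exp (-(t*r^2))
          = (t * Real.exp (-(7/8*(t*r^2)))) * Real.exp (-(t/8) * r^2) := by rw [e1]; ring
        _ ≤ (32/(7*ζ^2)) * Real.exp (-(t/8) * r^2) := by
            apply mul_le_mul_of_nonneg_right ?_ (Real.exp_pos _).le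
            calc t * Real.exp (-(7/8*(t*r^2))) ≤ t * Real.exp (-(7/32*(t*ζ^2))) :=
                  mul_le_mul_of_nonneg_left e2 ht0.le
              _ ≤ 32/(7*ζ^2) := e3
        _ ≤ (8/ζ^2) * Real.exp (-(t/8) * r^2) := by
            apply mul_le_mul_of_nonneg_right ?_ (Real.exp_pos _).le
            rw [div_le_div_iff₀ (by positivity) hζsq]
            nlinarith

lemma E0_high {ζ t : ℝ} (_ht : 0 ≤ t) {ξ : Rn n} (h : ζ < ‖ξ‖) :
    |E0 ζ t ξ| ≤ Real.exp (-t / (2*(1+‖ξ‖^2))) := by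
  rw [E0, if_pos h, abs_mul, abs_of_pos (Real.exp_pos _)]
  calc Real.exp (-t / (2*(1+‖ξ‖^2))) * |Real.cos _|
      ≤ Real.exp (-t / (2*(1+‖ξ‖^2))) * 1 :=
        mul_le_mul_of_nonneg_left (Real.abs_cos_le_one _) (Real.exp_pos _).le
    _ = Real.exp (-t / (2*(1+‖ξ‖^2))) := mul_one _

lemma E1_high {ζ t : ℝ} (hζ1 : ζ < 1) {ξ : Rn n} (h1 : 1 < ‖ξ‖) :
    |E1 ζ t ξ| ≤ (2 / Real.sqrt (1+‖ξ‖^2)) * Real.exp (-t / (2*(1+‖ξ‖^2))) := by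
  have h : ζ < ‖ξ‖ := hζ1.trans h1
  rw [E1, if_pos h, mul_div_assoc]
  set r := ‖ξ‖ with hrdef
  have hr0 : (0:ℝ) ≤ r := norm_nonneg ξ
  have hs : (0:ℝ) < 1+r^2 := by positivity
  have hss : (0:ℝ) < Real.sqrt (1+r^2) := Real.sqrt_pos.2 hs
  set D := Real.sqrt (4*r^2*(1+r^2)^2 - 1) / (2*(1+r^2)) with hD
  have hDge : Real.sqrt (1+r^2) / 2 ≤ D := by
    rw [hD]
    have hX : (1+r^2)^3 ≤ 4*r^2*(1+r^2)^2 - 1 := by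
      have hy : (1:ℝ) < r^2 := by nlinarith
      have h2 : (2:ℝ) ≤ 3*r^2 - 1 := by nlinarith
      have h4 : (4:ℝ) ≤ (1+r^2)^2 := by nlinarith
      nlinarith [mul_le_mul h4 h2 (by norm_num) (by positivity)]
    have hsq : Real.sqrt ((1+r^2)^3) ≤ Real.sqrt (4*r^2*(1+r^2)^2 - 1) :=
      Real.sqrt_le_sqrt hX
    rw [show (1+r^2)^3 = (1+r^2)^2*(1+r^2) by ring, Real.sqrt_mul (by positivity),
      Real.sqrt_sq hs.le] at hsq
    rw [div_le_div_iff₀ (by norm_num) (by positivity)]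
    nlinarith [hsq]
  have hD0 : 0 < D := lt_of_lt_of_le (by positivity) hDge
  clear_value D
  have hsin : |Real.sin (t*D) / D| ≤ 2 / Real.sqrt (1+r^2) := by
    rw [abs_div, abs_of_pos hD0]
    calc |Real.sin (t*D)| / D ≤ 1 / D := by
          gcongr
          exact Real.abs_sin_le_one _
      _ ≤ 2 / Real.sqrt (1+r^2) := by
          rw [div_le_div_iff₀ hD0 hss]
          nlinarith [hDge, hss]
  rw [abs_mul, abs_of_pos (Real.exp_pos _)]
  calc Real.exp (-t / (2*(1+r^2))) * |Real.sin (t*D) / D|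
      ≤ Real.exp (-t / (2*(1+r^2))) * (2 / Real.sqrt (1+r^2)) :=
        mul_le_mul_of_nonneg_left hsin (Real.exp_pos _).le
    _ = (2 / Real.sqrt (1+r^2)) * Real.exp (-t / (2*(1+r^2))) := by ring

lemma ftr_norm_le {f : Rn n → ℝ} (hf : MemL11 f) (ξ : Rn n) : ‖ftr f ξ‖ ≤ Norm11 f := by
  rw [ftr]
  refine (norm_integral_le_integral_norm _).trans ?_
  have h2 : (fun x : Rn n => ‖(f x : ℂ) * Complex.exp (-Complex.I * ((inner ℝ ξ x : ℝ) : ℂ))‖)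
      = fun x => |f x| := by
    funext x
    rw [norm_mul, Complex.norm_real, Real.norm_eq_abs]
    have h3 : ‖Complex.exp (-Complex.I * ((inner ℝ ξ x : ℝ) : ℂ))‖ = 1 := by
      rw [Complex.norm_exp]
      simp
    rw [h3, mul_one]
  rw [h2]
  refine integral_mono hf.1.abs hf.2 (fun x => ?_)
  have := abs_nonneg (f x)
  have := norm_nonneg x
  nlinarith

lemma norm11_nonneg (f : Rn n → ℝ) : 0 ≤ Norm11 f :=
  integral_nonneg fun x => by positivity

lemma hnorm_nonneg (l : ℝ) (f : Rn n → ℝ) : 0 ≤ HNorm l f :=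
  Real.rpow_nonneg (integral_nonneg fun ξ => by positivity) _

lemma hnorm_sq (l : ℝ) (f : Rn n → ℝ) :
    HNorm l f ^ 2 = ∫ ξ : Rn n, (1+‖ξ‖^2)^l * ‖ftr f ξ‖^2 := by
  rw [HNorm, HNormC]
  have hX : (0:ℝ) ≤ ∫ ξ : Rn n, (1+‖ξ‖^2)^l * ‖ftr f ξ‖^2 :=
    integral_nonneg fun ξ => by positivity
  rw [← Real.rpow_natCast ((∫ ξ : Rn n, (1+‖ξ‖^2)^l * ‖ftr f ξ‖^2) ^ ((1:ℝ)/2)) 2,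
    ← Real.rpow_mul hX]
  norm_num

set_option maxHeartbeats 2000000 in
lemma uhatC_low {ζ : ℝ} (hζ : zetaCond ζ) {t : ℝ} (ht : 1 ≤ t) {ξ : Rn n} (hr : ‖ξ‖ ≤ 1)
    (v₀ v₁ : Rn n → ℂ) {N₀ N₁ : ℝ} (h0 : ‖v₀ ξ‖ ≤ N₀) (h1 : ‖v₁ ξ‖ ≤ N₁) :
    ‖uhatC ζ v₀ v₁ t ξ‖^2 ≤ 9*(8/ζ^2)^2*(N₀+N₁)^2 * Real.exp (-(t/4)*‖ξ‖^2) := by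
  have hN0 : 0 ≤ N₀ := le_trans (norm_nonneg _) h0
  have hN1 : 0 ≤ N₁ := le_trans (norm_nonneg _) h1
  obtain ⟨hζ0, hζ1, hζe⟩ := hζ
  have hζsq : (0:ℝ) < ζ^2 := by positivity
  have hCE1 : (1:ℝ) ≤ 8/ζ^2 := by
    rw [le_div_iff₀ hζsq]; nlinarith
  have he80 : (0:ℝ) < Real.exp (-(t/8)*‖ξ‖^2) := Real.exp_pos _
  have hE0 : |E0 ζ t ξ| ≤ (8/ζ^2) * Real.exp (-(t/8)*‖ξ‖^2) := by
    refine (E0_low ⟨hζ0, hζ1, hζe⟩ (by linarith) hr).trans ?_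
    nlinarith
  have hE1 : |E1 ζ t ξ| ≤ (8/ζ^2) * Real.exp (-(t/8)*‖ξ‖^2) :=
    E1_low ⟨hζ0, hζ1, hζe⟩ ht hr
  have hc : ‖(((1:ℝ) / (2*(1+‖ξ‖^2)) : ℝ) : ℂ)‖ ≤ 1 := by
    rw [Complex.norm_real, Real.norm_eq_abs, abs_of_pos (by positivity),
      div_le_one (by positivity)]
    nlinarith [sq_nonneg ‖ξ‖]
  have hnorm : ‖uhatC ζ v₀ v₁ t ξ‖ ≤
      3*((8/ζ^2) * Real.exp (-(t/8)*‖ξ‖^2))*(N₀+N₁) := by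
    rw [uhatC]
    have hB0 : ‖((E0 ζ t ξ : ℝ) : ℂ)‖ = |E0 ζ t ξ| := by
      rw [Complex.norm_real, Real.norm_eq_abs]
    have hB1 : ‖((E1 ζ t ξ : ℝ) : ℂ)‖ = |E1 ζ t ξ| := by
      rw [Complex.norm_real, Real.norm_eq_abs]
    calc ‖v₀ ξ * ((E0 ζ t ξ : ℝ) : ℂ) +
          (v₁ ξ + v₀ ξ * (((1:ℝ) / (2*(1+‖ξ‖^2)) : ℝ) : ℂ)) * ((E1 ζ t ξ : ℝ) : ℂ)‖
        ≤ ‖v₀ ξ * ((E0 ζ t ξ : ℝ) : ℂ)‖ +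
          ‖(v₁ ξ + v₀ ξ * (((1:ℝ) / (2*(1+‖ξ‖^2)) : ℝ) : ℂ)) * ((E1 ζ t ξ : ℝ) : ℂ)‖ :=
          norm_add_le _ _
      _ = ‖v₀ ξ‖ * |E0 ζ t ξ| +
          ‖v₁ ξ + v₀ ξ * (((1:ℝ) / (2*(1+‖ξ‖^2)) : ℝ) : ℂ)‖ * |E1 ζ t ξ| := by
          rw [norm_mul, norm_mul, hB0, hB1]
      _ ≤ N₀ * ((8/ζ^2) * Real.exp (-(t/8)*‖ξ‖^2)) +
          (N₁ + N₀) * ((8/ζ^2) * Real.exp (-(t/8)*‖ξ‖^2)) := by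
          have hmid : ‖v₁ ξ + v₀ ξ * (((1:ℝ) / (2*(1+‖ξ‖^2)) : ℝ) : ℂ)‖ ≤ N₁ + N₀ := by
            refine (norm_add_le _ _).trans ?_
            rw [norm_mul]
            have := mul_le_mul h0 hc (norm_nonneg _) hN0
            nlinarith [norm_nonneg (v₀ ξ)]
          have e0n := abs_nonneg (E0 ζ t ξ)
          have e1n := abs_nonneg (E1 ζ t ξ)
          have t1 := mul_le_mul h0 hE0 e0n hN0
          have t2 := mul_le_mul hmid hE1 e1n (by linarith)
          linarith
      _ ≤ 3*((8/ζ^2) * Real.exp (-(t/8)*‖ξ‖^2))*(N₀+N₁) := by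
          have hc0 : (0:ℝ) ≤ (8/ζ^2) * Real.exp (-(t/8)*‖ξ‖^2) := by positivity
          nlinarith [mul_nonneg hc0 hN0, mul_nonneg hc0 hN1]
  calc ‖uhatC ζ v₀ v₁ t ξ‖^2
      ≤ (3*((8/ζ^2) * Real.exp (-(t/8)*‖ξ‖^2))*(N₀+N₁))^2 :=
        pow_le_pow_left₀ (norm_nonneg _) hnorm 2
    _ = 9*(8/ζ^2)^2*(N₀+N₁)^2 *
        (Real.exp (-(t/8)*‖ξ‖^2) * Real.exp (-(t/8)*‖ξ‖^2)) := by ring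
    _ = 9*(8/ζ^2)^2*(N₀+N₁)^2 * Real.exp (-(t/4)*‖ξ‖^2) := by
        rw [← Real.exp_add]; ring_nf

set_option maxHeartbeats 2000000 in
lemma uhatC_high {ζ : ℝ} (hζ1 : ζ < 1) {t : ℝ} (ht : 0 ≤ t) {ξ : Rn n} (hr : 1 < ‖ξ‖)
    (v₀ v₁ : Rn n → ℂ) :
    ‖uhatC ζ v₀ v₁ t ξ‖^2 ≤ Real.exp (-(t/(1+‖ξ‖^2))) *
      (18*‖v₀ ξ‖^2 + 16*‖v₁ ξ‖^2/(1+‖ξ‖^2)) := by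
  have hs0 : (0:ℝ) < 1+‖ξ‖^2 := by positivity
  have hs1 : (1:ℝ) ≤ 1+‖ξ‖^2 := by nlinarith [sq_nonneg ‖ξ‖]
  have hss : (0:ℝ) < Real.sqrt (1+‖ξ‖^2) := Real.sqrt_pos.2 hs0
  have hsq : (Real.sqrt (1+‖ξ‖^2))^2 = 1+‖ξ‖^2 := Real.sq_sqrt hs0.le
  have hE0 : |E0 ζ t ξ| ≤ Real.exp (-t/(2*(1+‖ξ‖^2))) := E0_high ht (hζ1.trans hr)
  have hE1 : |E1 ζ t ξ| ≤ (2/Real.sqrt (1+‖ξ‖^2)) * Real.exp (-t/(2*(1+‖ξ‖^2))) :=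
    E1_high hζ1 hr
  have hc : ‖(((1:ℝ) / (2*(1+‖ξ‖^2)) : ℝ) : ℂ)‖ ≤ 1 := by
    rw [Complex.norm_real, Real.norm_eq_abs, abs_of_pos (by positivity),
      div_le_one (by positivity)]
    nlinarith [sq_nonneg ‖ξ‖]
  set X := Real.exp (-t/(2*(1+‖ξ‖^2))) with hX
  have hX0 : 0 < X := Real.exp_pos _
  set Y := 1/Real.sqrt (1+‖ξ‖^2) with hY
  have hY0 : 0 < Y := by positivity
  have hY2 : Y^2 * (1+‖ξ‖^2) = 1 := by
    rw [hY, div_pow, one_pow, hsq]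
    field_simp
  have hY2le : Y^2 ≤ 1 := by nlinarith
  set P := ‖v₀ ξ‖ with hP
  set Q := ‖v₁ ξ‖ with hQ
  have hP0 : 0 ≤ P := norm_nonneg _
  have hQ0 : 0 ≤ Q := norm_nonneg _
  have hnorm : ‖uhatC ζ v₀ v₁ t ξ‖ ≤ P*X + (Q+P)*(2*Y*X) := by
    rw [uhatC]
    have hB0 : ‖((E0 ζ t ξ : ℝ) : ℂ)‖ = |E0 ζ t ξ| := by
      rw [Complex.norm_real, Real.norm_eq_abs]
    have hB1 : ‖((E1 ζ t ξ : ℝ) : ℂ)‖ = |E1 ζ t ξ| := by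
      rw [Complex.norm_real, Real.norm_eq_abs]
    have h2Y : (2/Real.sqrt (1+‖ξ‖^2)) * X = 2*Y*X := by
      rw [hY]; ring
    calc ‖v₀ ξ * ((E0 ζ t ξ : ℝ) : ℂ) +
          (v₁ ξ + v₀ ξ * (((1:ℝ) / (2*(1+‖ξ‖^2)) : ℝ) : ℂ)) * ((E1 ζ t ξ : ℝ) : ℂ)‖
        ≤ ‖v₀ ξ‖ * |E0 ζ t ξ| +
          ‖v₁ ξ + v₀ ξ * (((1:ℝ) / (2*(1+‖ξ‖^2)) : ℝ) : ℂ)‖ * |E1 ζ t ξ| := by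
          refine (norm_add_le _ _).trans ?_
          rw [norm_mul, norm_mul, hB0, hB1]
      _ ≤ P*X + (Q+P)*(2*Y*X) := by
          have hmid : ‖v₁ ξ + v₀ ξ * (((1:ℝ) / (2*(1+‖ξ‖^2)) : ℝ) : ℂ)‖ ≤ Q + P := by
            refine (norm_add_le _ _).trans ?_
            rw [norm_mul]
            have := mul_le_mul_of_nonneg_left hc (norm_nonneg (v₀ ξ))
            nlinarith [norm_nonneg (v₀ ξ)]
          rw [← h2Y]
          have t1 := mul_le_mul_of_nonneg_left hE0 hP0
          have t2 := mul_le_mul hmid hE1 (abs_nonneg _) (by linarith)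
          have h2Ynn : 0 ≤ (2/Real.sqrt (1+‖ξ‖^2)) * X := by positivity
          nlinarith [abs_nonneg (E0 ζ t ξ), abs_nonneg (E1 ζ t ξ)]
  have key : (P*X + (Q+P)*(2*Y*X))^2 ≤ X^2*(18*P^2 + 16*Q^2*Y^2) := by
    have h16 : 16*(P^2*Y^2*X^2) ≤ 16*(P^2*X^2) := by nlinarith [sq_nonneg (P*X)]
    nlinarith [sq_nonneg (P*X - 2*(Q+P)*(Y*X)), sq_nonneg ((Q-P)*(Y*X)), h16]
  have hXX : X^2 = Real.exp (-(t/(1+‖ξ‖^2))) := by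
    have harg : -t/(2*(1+‖ξ‖^2)) + -t/(2*(1+‖ξ‖^2)) = -(t/(1+‖ξ‖^2)) := by
      field_simp
      ring
    rw [sq, hX, ← Real.exp_add, harg]
  calc ‖uhatC ζ v₀ v₁ t ξ‖^2 ≤ (P*X + (Q+P)*(2*Y*X))^2 :=
        pow_le_pow_left₀ (norm_nonneg _) hnorm 2
    _ ≤ X^2*(18*P^2 + 16*Q^2*Y^2) := key
    _ = Real.exp (-(t/(1+‖ξ‖^2))) * (18*P^2 + 16*Q^2/(1+‖ξ‖^2)) := by
        rw [hXX]
        congr 1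
        have : Q^2*Y^2 = Q^2/(1+‖ξ‖^2) := by
          rw [eq_div_iff hs0.ne']
          nlinarith [hY2]
        rw [mul_assoc, this, mul_div_assoc]
    _ = Real.exp (-(t/(1+‖ξ‖^2))) * (18*‖v₀ ξ‖^2 + 16*‖v₁ ξ‖^2/(1+‖ξ‖^2)) := rfl

end DampedPlateAux

set_option maxHeartbeats 2000000 in
/-- **Theorem 5.1** (optimal `L²` decay in the wave-like regime `2 ≤ l < n/2 - 1`, `n ≥ 7`). -/
theorem stmt_12 (n : ℕ) (hn : 7 ≤ n) (l : ℝ) (hl : 2 ≤ l) (hl2 : l < (n : ℝ) / 2 - 1)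
    (ζ : ℝ) (hζ : zetaCond ζ) :
    ∃ C > (0 : ℝ), ∀ u₀ u₁ : Rn n → ℝ,
      MemH (l + 1) u₀ → MemL11 u₀ → MemH l u₁ → MemL11 u₁ →
      ∀ t : ℝ, 1 ≤ t →
        (∫ ξ : Rn n, ‖uhat ζ u₀ u₁ t ξ‖ ^ 2) ^ ((1 : ℝ) / 2) ≤
          C * I0 l u₀ u₁ * t ^ (-((l + 1) / 2)) := by
  obtain ⟨K, hK1, hK⟩ := DampedPlateAux.exp_div_bound (l+1) (by linarith)
  have hK0 : (0:ℝ) ≤ K := by linarith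
  obtain ⟨hζ0, hζ1, hζe⟩ := hζ
  have hgp : (0:ℝ) < (4*π)^((n:ℝ)/2) := Real.rpow_pos_of_pos (by positivity) _
  have hC4pos : (0:ℝ) < 9*(8/ζ^2)^2*(4*π)^((n:ℝ)/2) + 34*K := by
    have h1 : (0:ℝ) ≤ 9*(8/ζ^2)^2*(4*π)^((n:ℝ)/2) := by positivity
    linarith
  refine ⟨Real.sqrt (9*(8/ζ^2)^2*(4*π)^((n:ℝ)/2) + 34*K), Real.sqrt_pos.2 hC4pos, ?_⟩
  intro u₀ u₁ h0H h0L h1H h1L t ht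
  have ht0 : (0:ℝ) < t := lt_of_lt_of_le one_pos ht
  have hT0 : (0:ℝ) ≤ t^(-(l+1)) := Real.rpow_nonneg ht0.le _
  have hb0 : ∀ ξ : Rn n, ‖ftr u₀ ξ‖ ≤ Norm11 u₀ := fun ξ => DampedPlateAux.ftr_norm_le h0L ξ
  have hb1 : ∀ ξ : Rn n, ‖ftr u₁ ξ‖ ≤ Norm11 u₁ := fun ξ => DampedPlateAux.ftr_norm_le h1L ξ
  have hN₀0 : 0 ≤ Norm11 u₀ := DampedPlateAux.norm11_nonneg u₀
  have hN₁0 : 0 ≤ Norm11 u₁ := DampedPlateAux.norm11_nonneg u₁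
  have hH₀0 : 0 ≤ HNorm (l+1) u₀ := DampedPlateAux.hnorm_nonneg _ _
  have hH₁0 : 0 ≤ HNorm l u₁ := DampedPlateAux.hnorm_nonneg _ _
  -- pointwise bound
  have hpt : ∀ ξ : Rn n, ‖uhat ζ u₀ u₁ t ξ‖^2 ≤
      9*(8/ζ^2)^2*(Norm11 u₀ + Norm11 u₁)^2 * Real.exp (-(t/4)*‖ξ‖^2) +
      K*t^(-(l+1)) * (18*((1+‖ξ‖^2)^(l+1) * ‖ftr u₀ ξ‖^2) +
        16*((1+‖ξ‖^2)^l * ‖ftr u₁ ξ‖^2)) := by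
    intro ξ
    have hs0 : (0:ℝ) < 1+‖ξ‖^2 := by positivity
    rcases le_or_gt ‖ξ‖ 1 with hr | hr
    · have h := DampedPlateAux.uhatC_low ⟨hζ0, hζ1, hζe⟩ ht hr (ftr u₀) (ftr u₁)
        (hb0 ξ) (hb1 ξ)
      have hrest : (0:ℝ) ≤ K*t^(-(l+1)) * (18*((1+‖ξ‖^2)^(l+1) * ‖ftr u₀ ξ‖^2) +
          16*((1+‖ξ‖^2)^l * ‖ftr u₁ ξ‖^2)) :=
        mul_nonneg (mul_nonneg hK0 hT0) (by positivity)
      exact le_trans h (le_add_of_nonneg_right hrest)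
    · have h := DampedPlateAux.uhatC_high hζ1 ht0.le hr (ftr u₀) (ftr u₁)
      refine le_trans h (le_trans ?_ (le_add_of_nonneg_left (by positivity)))
      have hKe := hK t (1+‖ξ‖^2) ht0 hs0
      have hsl : (1+‖ξ‖^2)^(l+1) = (1+‖ξ‖^2)^l * (1+‖ξ‖^2) := by
        rw [Real.rpow_add hs0, Real.rpow_one]
      have hrhs0 : (0:ℝ) ≤ 18*‖ftr u₀ ξ‖^2 + 16*‖ftr u₁ ξ‖^2/(1+‖ξ‖^2) := by positivity
      calc Real.exp (-(t/(1+‖ξ‖^2))) * (18*‖ftr u₀ ξ‖^2 + 16*‖ftr u₁ ξ‖^2/(1+‖ξ‖^2))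
          ≤ (K * t^(-(l+1)) * (1+‖ξ‖^2)^(l+1)) *
            (18*‖ftr u₀ ξ‖^2 + 16*‖ftr u₁ ξ‖^2/(1+‖ξ‖^2)) :=
            mul_le_mul_of_nonneg_right hKe hrhs0
        _ = K*t^(-(l+1)) * (18*((1+‖ξ‖^2)^(l+1) * ‖ftr u₀ ξ‖^2) +
            16*((1+‖ξ‖^2)^l * ‖ftr u₁ ξ‖^2)) := by
            rw [hsl]; field_simp
  -- integrability
  have hgauss : Integrable (fun ξ : Rn n => Real.exp (-(t/4)*‖ξ‖^2)) := by
    have hb : (0:ℝ) < t/4 := by linarith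
    have h := (GaussianFourier.integrable_cexp_neg_mul_sq_norm_add (V := Rn n)
      (b := ((t/4:ℝ):ℂ)) (by simpa using hb) 0 0).norm
    refine h.congr ?_
    filter_upwards with v
    rw [show -((t/4:ℝ):ℂ) * (‖v‖:ℂ)^2 + 0 * ((inner ℝ (0:Rn n) v : ℝ):ℂ)
        = (((-(t/4) * ‖v‖^2 : ℝ)):ℂ) by push_cast; ring]
    rw [Complex.norm_exp_ofReal]
  have hw0 : Integrable (fun ξ : Rn n => (1+‖ξ‖^2)^(l+1) * ‖ftr u₀ ξ‖^2) := h0H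
  have hw1 : Integrable (fun ξ : Rn n => (1+‖ξ‖^2)^l * ‖ftr u₁ ξ‖^2) := h1H
  have hin1 : Integrable (fun ξ : Rn n =>
      9*(8/ζ^2)^2*(Norm11 u₀ + Norm11 u₁)^2 * Real.exp (-(t/4)*‖ξ‖^2)) :=
    hgauss.const_mul _
  have hin0a : Integrable (fun ξ : Rn n => 18*((1+‖ξ‖^2)^(l+1) * ‖ftr u₀ ξ‖^2)) :=
    hw0.const_mul 18
  have hin0b : Integrable (fun ξ : Rn n => 16*((1+‖ξ‖^2)^l * ‖ftr u₁ ξ‖^2)) :=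
    hw1.const_mul 16
  have hin2 : Integrable (fun ξ : Rn n => 18*((1+‖ξ‖^2)^(l+1) * ‖ftr u₀ ξ‖^2) +
      16*((1+‖ξ‖^2)^l * ‖ftr u₁ ξ‖^2)) := hin0a.add hin0b
  have hin3 : Integrable (fun ξ : Rn n =>
      K*t^(-(l+1)) * (18*((1+‖ξ‖^2)^(l+1) * ‖ftr u₀ ξ‖^2) +
        16*((1+‖ξ‖^2)^l * ‖ftr u₁ ξ‖^2))) := hin2.const_mul _
  have hGint : Integrable (fun ξ : Rn n =>
      9*(8/ζ^2)^2*(Norm11 u₀ + Norm11 u₁)^2 * Real.exp (-(t/4)*‖ξ‖^2) +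
      K*t^(-(l+1)) * (18*((1+‖ξ‖^2)^(l+1) * ‖ftr u₀ ξ‖^2) +
        16*((1+‖ξ‖^2)^l * ‖ftr u₁ ξ‖^2))) := hin1.add hin3
  have hIle : (∫ ξ : Rn n, ‖uhat ζ u₀ u₁ t ξ‖^2) ≤
      ∫ ξ : Rn n, (9*(8/ζ^2)^2*(Norm11 u₀ + Norm11 u₁)^2 * Real.exp (-(t/4)*‖ξ‖^2) +
        K*t^(-(l+1)) * (18*((1+‖ξ‖^2)^(l+1) * ‖ftr u₀ ξ‖^2) +
          16*((1+‖ξ‖^2)^l * ‖ftr u₁ ξ‖^2))) :=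
    integral_mono_of_nonneg (Filter.Eventually.of_forall fun ξ => by positivity) hGint
      (Filter.Eventually.of_forall hpt)
  have hsplit : (∫ ξ : Rn n,
      (9*(8/ζ^2)^2*(Norm11 u₀ + Norm11 u₁)^2 * Real.exp (-(t/4)*‖ξ‖^2) +
        K*t^(-(l+1)) * (18*((1+‖ξ‖^2)^(l+1) * ‖ftr u₀ ξ‖^2) +
          16*((1+‖ξ‖^2)^l * ‖ftr u₁ ξ‖^2)))) =
      9*(8/ζ^2)^2*(Norm11 u₀ + Norm11 u₁)^2 * (∫ ξ : Rn n, Real.exp (-(t/4)*‖ξ‖^2)) +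
      K*t^(-(l+1)) * (18*(∫ ξ : Rn n, (1+‖ξ‖^2)^(l+1) * ‖ftr u₀ ξ‖^2) +
        16*(∫ ξ : Rn n, (1+‖ξ‖^2)^l * ‖ftr u₁ ξ‖^2)) := by
    rw [integral_add hin1 hin3, integral_const_mul, integral_const_mul,
      integral_add hin0a hin0b, integral_const_mul, integral_const_mul]
  have hgaussval : (∫ ξ : Rn n, Real.exp (-(t/4)*‖ξ‖^2)) ≤ (4*π)^((n:ℝ)/2) * t^(-(l+1)) := by
    rw [GaussianFourier.integral_rexp_neg_mul_sq_norm (V := Rn n) (by linarith : (0:ℝ) < t/4)]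
    have hfr : ((Module.finrank ℝ (Rn n) : ℝ)) = (n:ℝ) := by
      rw [finrank_euclideanSpace_fin]
    rw [hfr]
    have h1 : π/(t/4) = 4*π/t := by field_simp
    rw [h1, Real.div_rpow (by positivity) ht0.le, div_eq_mul_inv, ← Real.rpow_neg ht0.le]
    exact mul_le_mul_of_nonneg_left
      (Real.rpow_le_rpow_of_exponent_le ht (by linarith)) (by positivity)
  have hsq0 : (∫ ξ : Rn n, (1+‖ξ‖^2)^(l+1) * ‖ftr u₀ ξ‖^2) = HNorm (l+1) u₀ ^ 2 :=
    (DampedPlateAux.hnorm_sq (l+1) u₀).symm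
  have hsq1 : (∫ ξ : Rn n, (1+‖ξ‖^2)^l * ‖ftr u₁ ξ‖^2) = HNorm l u₁ ^ 2 :=
    (DampedPlateAux.hnorm_sq l u₁).symm
  have hI0eq : I0 l u₀ u₁ = HNorm l u₁ + HNorm (l+1) u₀ + Norm11 u₁ + Norm11 u₀ := rfl
  have hI00 : 0 ≤ I0 l u₀ u₁ := by rw [hI0eq]; linarith
  have hfinal : (∫ ξ : Rn n, ‖uhat ζ u₀ u₁ t ξ‖^2) ≤
      (9*(8/ζ^2)^2*(4*π)^((n:ℝ)/2) + 34*K) * (I0 l u₀ u₁)^2 * t^(-(l+1)) := by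
    refine hIle.trans ?_
    rw [hsplit, hsq0, hsq1]
    have hA : (Norm11 u₀ + Norm11 u₁)^2 ≤ (I0 l u₀ u₁)^2 := by
      apply pow_le_pow_left₀ (by linarith) ?_ 2
      rw [hI0eq]; linarith
    have hH0 : HNorm (l+1) u₀ ^2 ≤ (I0 l u₀ u₁)^2 := by
      apply pow_le_pow_left₀ hH₀0 ?_ 2
      rw [hI0eq]; linarith
    have hH1 : HNorm l u₁ ^2 ≤ (I0 l u₀ u₁)^2 := by
      apply pow_le_pow_left₀ hH₁0 ?_ 2
      rw [hI0eq]; linarith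
    have hAnn : (0:ℝ) ≤ (Norm11 u₀ + Norm11 u₁)^2 := by positivity
    have hcemm : (0:ℝ) ≤ 9*(8/ζ^2)^2 := by positivity
    have term1 : 9*(8/ζ^2)^2*(Norm11 u₀ + Norm11 u₁)^2 * (∫ ξ : Rn n, Real.exp (-(t/4)*‖ξ‖^2))
        ≤ 9*(8/ζ^2)^2*(4*π)^((n:ℝ)/2) * (I0 l u₀ u₁)^2 * t^(-(l+1)) := by
      have s1 : 9*(8/ζ^2)^2*(Norm11 u₀ + Norm11 u₁)^2 *
          (∫ ξ : Rn n, Real.exp (-(t/4)*‖ξ‖^2)) ≤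
          9*(8/ζ^2)^2*(Norm11 u₀ + Norm11 u₁)^2 * ((4*π)^((n:ℝ)/2) * t^(-(l+1))) := by
        apply mul_le_mul_of_nonneg_left hgaussval (by positivity)
      refine s1.trans ?_
      have := mul_le_mul_of_nonneg_left hA
        (mul_nonneg (mul_nonneg hcemm hgp.le) hT0)
      nlinarith [this]
    have term2 : K*t^(-(l+1)) * (18*(HNorm (l+1) u₀^2) + 16*(HNorm l u₁^2)) ≤
        34*K * (I0 l u₀ u₁)^2 * t^(-(l+1)) := by
      have h18 := mul_le_mul_of_nonneg_left hH0 (by positivity : (0:ℝ) ≤ (18:ℝ))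
      have h16 := mul_le_mul_of_nonneg_left hH1 (by positivity : (0:ℝ) ≤ (16:ℝ))
      have hmid : 18*(HNorm (l+1) u₀^2) + 16*(HNorm l u₁^2) ≤ 34*(I0 l u₀ u₁)^2 := by
        linarith
      have := mul_le_mul_of_nonneg_left hmid (mul_nonneg hK0 hT0)
      nlinarith [this]
    linarith
  have hintnn : (0:ℝ) ≤ ∫ ξ : Rn n, ‖uhat ζ u₀ u₁ t ξ‖^2 :=
    integral_nonneg fun ξ => by positivity
  have hpow := Real.rpow_le_rpow hintnn hfinal (by norm_num : (0:ℝ) ≤ 1/2)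
  refine hpow.trans (le_of_eq ?_)
  rw [Real.mul_rpow (by positivity) hT0, Real.mul_rpow hC4pos.le (sq_nonneg _)]
  congr 1
  · congr 1
    · rw [Real.sqrt_eq_rpow]
    · rw [← Real.rpow_natCast (I0 l u₀ u₁) 2, ← Real.rpow_mul hI00]
      norm_num
  · rw [← Real.rpow_mul ht0.le]
    congr 1
    ring
end
end
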